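/- arXiv:0705.3918 — 4 statements merged into one kernel-verified Lean document; each statement's English description precedes it below -/
import Mathlib

section
/- Let Φ be a Leonard system in A and let ⟨·,·⟩ be the bilinear form on the irreducible A-module V associated with the antiautomorphism † of Φ. Then ⟨·,·⟩ is symmetric. -/
open Matrix Polynomial

/-- A Leonard system in the matrix algebra `Mat_{d+1}(K)`: multiplicity-free
elements `A`, `Astar` with orderings `E`, `Estar` of their primitive idempotents
satisfying the irreducible-tridiagonality conditions. -/
structure LeonardSystem (K : Type*) [Field K] (d : ℕ) where
  A : Matrix (Fin (d+1)) (Fin (d+1)) K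
  Astar : Matrix (Fin (d+1)) (Fin (d+1)) K
  E : Fin (d+1) → Matrix (Fin (d+1)) (Fin (d+1)) K
  Estar : Fin (d+1) → Matrix (Fin (d+1)) (Fin (d+1)) K
  θ : Fin (d+1) → K
  θs : Fin (d+1) → K
  θ_inj : Function.Injective θ
  θs_inj : Function.Injective θs
  E_ne : ∀ i, E i ≠ 0
  Es_ne : ∀ i, Estar i ≠ 0
  E_mul : ∀ i j, E i * E j = if i = j then E i else 0
  Es_mul : ∀ i j, Estar i * Estar j = if i = j then Estar i else 0
  E_sum : ∑ i, E i = 1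
  Es_sum : ∑ i, Estar i = 1
  A_eq : A = ∑ i, θ i • E i
  As_eq : Astar = ∑ i, θs i • Estar i
  trid0 : ∀ i j : Fin (d+1), ((i : ℤ) - (j : ℤ)).natAbs > 1 → E i * Astar * E j = 0
  trid1 : ∀ i j : Fin (d+1), ((i : ℤ) - (j : ℤ)).natAbs = 1 → E i * Astar * E j ≠ 0
  strid0 : ∀ i j : Fin (d+1), ((i : ℤ) - (j : ℤ)).natAbs > 1 → Estar i * A * Estar j = 0
  strid1 : ∀ i j : Fin (d+1), ((i : ℤ) - (j : ℤ)).natAbs = 1 → Estar i * A * Estar j ≠ 0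

namespace LeonardSystem

variable {K : Type*} [Field K] {d : ℕ}

/-- Eigenvalues indexed by `ℕ` (junk value outside range). -/
def θN (L : LeonardSystem K d) (i : ℕ) : K := if h : i < d + 1 then L.θ ⟨i, h⟩ else 0

def θsN (L : LeonardSystem K d) (i : ℕ) : K := if h : i < d + 1 then L.θs ⟨i, h⟩ else 0

/-- `τ_i(A) = (A-θ₀)(A-θ₁)⋯(A-θ_{i-1})`. -/
def tauA (L : LeonardSystem K d) : ℕ → Matrix (Fin (d+1)) (Fin (d+1)) K
  | 0 => 1
  | i + 1 => L.tauA i * (L.A - L.θN i • 1)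

/-- `η_i(A) = (A-θ_d)(A-θ_{d-1})⋯(A-θ_{d-i+1})`. -/
def etaA (L : LeonardSystem K d) : ℕ → Matrix (Fin (d+1)) (Fin (d+1)) K
  | 0 => 1
  | i + 1 => L.etaA i * (L.A - L.θN (d - i) • 1)

/-- `τ*_i(A*)`. -/
def tausA (L : LeonardSystem K d) : ℕ → Matrix (Fin (d+1)) (Fin (d+1)) K
  | 0 => 1
  | i + 1 => L.tausA i * (L.Astar - L.θsN i • 1)

/-- `η*_i(A*)`. -/
def etasA (L : LeonardSystem K d) : ℕ → Matrix (Fin (d+1)) (Fin (d+1)) K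
  | 0 => 1
  | i + 1 => L.etasA i * (L.Astar - L.θsN (d - i) • 1)

/-- Scalar `τ_i(x)`. -/
def tauS (L : LeonardSystem K d) (i : ℕ) (x : K) : K := ∏ j ∈ Finset.range i, (x - L.θN j)

/-- Scalar `η_i(x)`. -/
def etaS (L : LeonardSystem K d) (i : ℕ) (x : K) : K := ∏ j ∈ Finset.range i, (x - L.θN (d - j))

/-- Scalar `τ*_i(x)`. -/
def tausS (L : LeonardSystem K d) (i : ℕ) (x : K) : K := ∏ j ∈ Finset.range i, (x - L.θsN j)

/-- Scalar `η*_i(x)`. -/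
def etasS (L : LeonardSystem K d) (i : ℕ) (x : K) : K := ∏ j ∈ Finset.range i, (x - L.θsN (d - j))

/-- First split sequence `φ_i`. -/
noncomputable def varphi (L : LeonardSystem K d) (i : ℕ) : K :=
  (L.θsN 0 - L.θsN i) * (L.tauA i * L.Estar 0).trace / (L.tauA (i-1) * L.Estar 0).trace

/-- Second split sequence `ϕ_i`. -/
noncomputable def phi (L : LeonardSystem K d) (i : ℕ) : K :=
  (L.θsN 0 - L.θsN i) * (L.etaA i * L.Estar 0).trace / (L.etaA (i-1) * L.Estar 0).trace

/-- `φ₁φ₂⋯φ_r`. -/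
noncomputable def varphiProd (L : LeonardSystem K d) (r : ℕ) : K :=
  ∏ j ∈ Finset.range r, L.varphi (j + 1)

/-- `ϕ₁ϕ₂⋯ϕ_r`. -/
noncomputable def phiProd (L : LeonardSystem K d) (r : ℕ) : K :=
  ∏ j ∈ Finset.range r, L.phi (j + 1)

/-- `φ_d φ_{d-1} ⋯ φ_{d-r+1}`. -/
noncomputable def varphiRevProd (L : LeonardSystem K d) (r : ℕ) : K :=
  ∏ j ∈ Finset.range r, L.varphi (d - j)

/-- `ϕ_d ϕ_{d-1} ⋯ ϕ_{d-r+1}`. -/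
noncomputable def phiRevProd (L : LeonardSystem K d) (r : ℕ) : K :=
  ∏ j ∈ Finset.range r, L.phi (d - j)

end LeonardSystem

section AuxBilin

open Matrix
open scoped DirectSum

variable {K : Type*} [Field K] {d : ℕ}

private lemma rankOne_of_orth_idem
    (E : Fin (d+1) → Matrix (Fin (d+1)) (Fin (d+1)) K)
    (hmul : ∀ i j, E i * E j = if i = j then E i else 0)
    (hsum : ∑ i, E i = 1) (hne : ∀ i, E i ≠ 0) (i : Fin (d+1)) :
    ∃ v w : Fin (d+1) → K, w ⬝ᵥ v = 1 ∧ E i = Matrix.vecMulVec v w := by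
  classical
  set R : Fin (d+1) → Submodule K (Fin (d+1) → K) :=
    fun j => LinearMap.range (E j).mulVecLin with hR
  -- each R j nontrivial
  have hRne : ∀ j, R j ≠ ⊥ := by
    intro j hbot
    apply hne j
    ext a b
    have : (E j).mulVec (Pi.single b 1) ∈ R j := ⟨Pi.single b 1, rfl⟩
    rw [hbot, Submodule.mem_bot] at this
    have := congrFun this a
    simpa [Matrix.mulVec_single] using this
  -- mem R j iff fixed by E j
  have hfix : ∀ j x, x ∈ R j → (E j).mulVec x = x := by
    rintro j x ⟨u, rfl⟩
    show (E j).mulVec ((E j).mulVec u) = _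
    rw [Matrix.mulVec_mulVec, hmul]
    simp
  have hkill : ∀ j k x, j ≠ k → x ∈ R k → (E j).mulVec x = 0 := by
    rintro j k x hjk ⟨u, rfl⟩
    show (E j).mulVec ((E k).mulVec u) = _
    rw [Matrix.mulVec_mulVec, hmul]
    simp [hjk]
  -- sup is top
  have hsupr : ⨆ j, R j = ⊤ := by
    rw [eq_top_iff]
    intro x _
    have hx : x = ∑ j, (E j).mulVec x := by
      have : (∑ j, E j) *ᵥ x = ∑ j, E j *ᵥ x := by
        ext a
        simp [Matrix.mulVec, dotProduct, Finset.sum_apply, Finset.sum_mul, Matrix.sum_apply]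
        rw [Finset.sum_comm]
      rw [← this, hsum, Matrix.one_mulVec]
    rw [hx]
    exact Submodule.sum_mem _ fun j _ =>
      Submodule.mem_iSup_of_mem j ⟨x, rfl⟩
  -- independence
  have hind : iSupIndep R := by
    rw [iSupIndep_def]
    intro j
    rw [Submodule.disjoint_def]
    intro x hxj hxo
    have h1 : (E j).mulVec x = x := hfix j x hxj
    have h2 : (E j).mulVec x = 0 := by
      have : (⨆ k ∈ ({j}ᶜ : Set (Fin (d+1))), R k) ≤ LinearMap.ker (E j).mulVecLin := by
        refine iSup_le fun k => iSup_le fun hk y hy => ?_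
        exact hkill j k y (Ne.symm hk) hy
      exact this hxo
    rw [h1] at h2; exact h2
  have hint : DirectSum.IsInternal R :=
    DirectSum.isInternal_submodule_of_iSupIndep_of_iSup_eq_top hind hsupr
  -- dimension count
  have hdim : ∑ j, Module.finrank K (R j) = d + 1 := by
    classical
    have hequiv : Module.finrank K (⨁ j, R j) = Module.finrank K (Fin (d+1) → K) :=
      (LinearEquiv.ofBijective (DirectSum.coeLinearMap R) hint).finrank_eq
    rw [Module.finrank_directSum] at hequiv
    simpa using hequiv
  have hone : ∀ j, 1 ≤ Module.finrank K (R j) := by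
    intro j
    by_contra h
    push_neg at h
    have h0 : Module.finrank K (R j) = 0 := by omega
    exact hRne j (Submodule.finrank_eq_zero.mp h0)
  -- each has finrank exactly 1
  have hr1 : Module.finrank K (R i) = 1 := by
    have herase : ∑ j ∈ Finset.univ.erase i, Module.finrank K (R j)
        + Module.finrank K (R i) = d + 1 := by
      rw [Finset.sum_erase_add _ _ (Finset.mem_univ i)]
      exact hdim
    have hcard : (Finset.univ.erase i).card = d := by
      rw [Finset.card_erase_of_mem (Finset.mem_univ i)]
      simp
    have hge : (Finset.univ.erase i).card ≤
        ∑ j ∈ Finset.univ.erase i, Module.finrank K (R j) := by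
      calc (Finset.univ.erase i).card
          = ∑ _j ∈ Finset.univ.erase i, 1 := by simp
        _ ≤ _ := Finset.sum_le_sum fun j _ => hone j
    have := hone i
    omega
  -- get a spanning vector
  obtain ⟨x, hxR, hx0⟩ := Submodule.exists_mem_ne_zero_of_ne_bot (hRne i)
  have hspan : Submodule.span K {x} = R i := by
    apply Submodule.eq_of_le_of_finrank_le
    · rwa [Submodule.span_singleton_le_iff_mem]
    · rw [hr1, finrank_span_singleton hx0]
  -- columns are multiples of x
  have hcol : ∀ b, ∃ c : K, (E i).mulVec (Pi.single b 1) = c • x := by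
    intro b
    have : (E i).mulVec (Pi.single b 1) ∈ R i := ⟨_, rfl⟩
    rw [← hspan] at this
    obtain ⟨c, hc⟩ := Submodule.mem_span_singleton.mp this
    exact ⟨c, hc.symm⟩
  choose w hw using hcol
  have hEvw : E i = Matrix.vecMulVec x w := by
    ext a b
    have h1 := congrFun (hw b) a
    have h2 : (E i).mulVec (Pi.single b 1) a = E i a b := by
      simp [Matrix.mulVec_single]
    rw [h2] at h1
    rw [h1]
    simp [Matrix.vecMulVec_apply]
    ring
  -- w ⬝ᵥ x = 1
  have hEE := hmul i i
  rw [if_pos rfl, hEvw] at hEE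
  have hex : ∃ a b, x a * w b ≠ 0 := by
    by_contra hno
    push_neg at hno
    apply hne i
    rw [hEvw]
    ext a b
    simpa [Matrix.vecMulVec_apply] using hno a b
  obtain ⟨a, b, hab0⟩ := hex
  have hab' : (Matrix.vecMulVec x w * Matrix.vecMulVec x w) a b
      = Matrix.vecMulVec x w a b := by rw [hEE]
  have hsum1 : (x a * w b) * (w ⬝ᵥ x) = (x a * w b) * 1 := by
    have : ∑ k, (x a * w k) * (x k * w b) = x a * w b := by
      simpa [Matrix.mul_apply, Matrix.vecMulVec_apply] using hab'
    rw [mul_one]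
    calc (x a * w b) * (w ⬝ᵥ x)
        = ∑ k, (x a * w k) * (x k * w b) := by
          simp [dotProduct, Finset.mul_sum]
          exact Finset.sum_congr rfl fun k _ => by ring
      _ = x a * w b := this
  have hwx : w ⬝ᵥ x = 1 := mul_left_cancel₀ hab0 hsum1
  exact ⟨x, w, hwx, hEvw⟩


private lemma sandwich_trace (v w : Fin (d+1) → K)
    (X : Matrix (Fin (d+1)) (Fin (d+1)) K) :
    Matrix.vecMulVec v w * X * Matrix.vecMulVec v w
      = (Matrix.vecMulVec v w * X).trace • Matrix.vecMulVec v w := by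
  ext a b
  simp only [Matrix.mul_apply, Matrix.vecMulVec_apply, Matrix.smul_apply, Matrix.trace,
    Matrix.diag_apply, smul_eq_mul, Finset.sum_mul, Finset.mul_sum]
  exact Finset.sum_congr rfl fun k _ => Finset.sum_congr rfl fun l _ => by ring

private lemma vecMulVec_mulVec' (v w x : Fin (d+1) → K) :
    Matrix.vecMulVec v w *ᵥ x = (w ⬝ᵥ x) • v := by
  ext a
  simp only [Matrix.mulVec, dotProduct, Matrix.vecMulVec_apply, Pi.smul_apply,
    smul_eq_mul, Finset.sum_mul]
  exact Finset.sum_congr rfl fun j _ => by ring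

private lemma mul_idem_left (E : Fin (d+1) → Matrix (Fin (d+1)) (Fin (d+1)) K)
    (θ : Fin (d+1) → K)
    (hmul : ∀ i j, E i * E j = if i = j then E i else 0)
    (A : Matrix (Fin (d+1)) (Fin (d+1)) K) (hA : A = ∑ i, θ i • E i) (i : Fin (d+1)) :
    A * E i = θ i • E i ∧ E i * A = θ i • E i := by
  constructor
  · rw [hA, Finset.sum_mul]
    rw [Finset.sum_eq_single i (fun k _ hk => by
      rw [smul_mul_assoc, hmul, if_neg hk, smul_zero]) (by simp)]
    rw [smul_mul_assoc, hmul, if_pos rfl]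
  · rw [hA, Finset.mul_sum]
    rw [Finset.sum_eq_single i (fun k _ hk => by
      rw [mul_smul_comm, hmul, if_neg (Ne.symm hk), smul_zero]) (by simp)]
    rw [mul_smul_comm, hmul, if_pos rfl]

private lemma commutant_scalar (L : LeonardSystem K d)
    (H : Matrix (Fin (d+1)) (Fin (d+1)) K)
    (h1 : H * L.A = L.A * H) (h2 : H * L.Astar = L.Astar * H) :
    ∃ c : K, H = c • 1 := by
  classical
  have hAE := fun i => (mul_idem_left L.E L.θ L.E_mul L.A L.A_eq i).1
  have hEA := fun i => (mul_idem_left L.E L.θ L.E_mul L.A L.A_eq i).2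
  -- off-diagonal blocks vanish
  have hzero : ∀ i j, i ≠ j → L.E i * H * L.E j = 0 := by
    intro i j hij
    have key : L.θ i • (L.E i * H * L.E j) = L.θ j • (L.E i * H * L.E j) := by
      calc L.θ i • (L.E i * H * L.E j)
          = (L.θ i • L.E i) * H * L.E j := by rw [smul_mul_assoc, smul_mul_assoc]
        _ = L.E i * L.A * H * L.E j := by rw [hEA i]
        _ = L.E i * (L.A * H) * L.E j := by rw [mul_assoc (L.E i)]
        _ = L.E i * (H * L.A) * L.E j := by rw [← h1]
        _ = L.E i * H * (L.A * L.E j) := by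
            rw [← mul_assoc (L.E i), mul_assoc (L.E i * H)]
        _ = L.E i * H * (L.θ j • L.E j) := by rw [hAE j]
        _ = L.θ j • (L.E i * H * L.E j) := by rw [mul_smul_comm]
    have hθ : L.θ i - L.θ j ≠ 0 := sub_ne_zero.mpr fun h => hij (L.θ_inj h)
    have h0 : (L.θ i - L.θ j) • (L.E i * H * L.E j) = 0 := by
      rw [sub_smul, key, sub_self]
    rcases smul_eq_zero.mp h0 with h | h
    · exact absurd h hθ
    · exact h
  set c : Fin (d+1) → K := fun i => (L.E i * H).trace with hc
  have hEH : ∀ i, L.E i * H = c i • L.E i := by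
    intro i
    obtain ⟨v, w, hwv, hE⟩ := rankOne_of_orth_idem L.E L.E_mul L.E_sum L.E_ne i
    have hself : L.E i * H = L.E i * H * L.E i := by
      calc L.E i * H = L.E i * H * 1 := (mul_one _).symm
        _ = L.E i * H * ∑ j, L.E j := by rw [L.E_sum]
        _ = ∑ j, L.E i * H * L.E j := by rw [Finset.mul_sum]
        _ = L.E i * H * L.E i := by
            rw [Finset.sum_eq_single i (fun k _ hk => hzero i k (Ne.symm hk)) (by simp)]
    show L.E i * H = (L.E i * H).trace • L.E i
    conv_lhs => rw [hself]
    rw [hE]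
    exact sandwich_trace v w H
  have hHE : ∀ i, H * L.E i = c i • L.E i := by
    intro i
    obtain ⟨v, w, hwv, hE⟩ := rankOne_of_orth_idem L.E L.E_mul L.E_sum L.E_ne i
    have hself : H * L.E i = L.E i * H * L.E i := by
      calc H * L.E i = 1 * (H * L.E i) := (one_mul _).symm
        _ = (∑ j, L.E j) * (H * L.E i) := by rw [L.E_sum]
        _ = ∑ j, L.E j * (H * L.E i) := by rw [Finset.sum_mul]
        _ = ∑ j, L.E j * H * L.E i := by
            exact Finset.sum_congr rfl fun j _ => by rw [mul_assoc]
        _ = L.E i * H * L.E i := by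
            rw [Finset.sum_eq_single i (fun k _ hk => hzero k i hk) (by simp)]
    show H * L.E i = (L.E i * H).trace • L.E i
    rw [hself, hE]
    exact sandwich_trace v w H
  have hadj : ∀ i j : Fin (d+1), ((i : ℤ) - (j : ℤ)).natAbs = 1 → c i = c j := by
    intro i j hij
    have hM := L.trid1 i j hij
    have key : c i • (L.E i * L.Astar * L.E j) = c j • (L.E i * L.Astar * L.E j) := by
      calc c i • (L.E i * L.Astar * L.E j)
          = (c i • L.E i) * L.Astar * L.E j := by rw [smul_mul_assoc, smul_mul_assoc]
        _ = (L.E i * H) * L.Astar * L.E j := by rw [hEH]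
        _ = L.E i * (H * L.Astar) * L.E j := by rw [mul_assoc (L.E i)]
        _ = L.E i * (L.Astar * H) * L.E j := by rw [h2]
        _ = L.E i * L.Astar * (H * L.E j) := by
            rw [← mul_assoc (L.E i), mul_assoc (L.E i * L.Astar)]
        _ = L.E i * L.Astar * (c j • L.E j) := by rw [hHE]
        _ = c j • (L.E i * L.Astar * L.E j) := by rw [mul_smul_comm]
    have h0 : (c i - c j) • (L.E i * L.Astar * L.E j) = 0 := by
      rw [sub_smul, key, sub_self]
    rcases smul_eq_zero.mp h0 with h | h
    · exact sub_eq_zero.mp h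
    · exact absurd h hM
  have hall : ∀ i : Fin (d+1), c i = c 0 := by
    have main : ∀ k (hk : k < d + 1), c ⟨k, hk⟩ = c 0 := by
      intro k
      induction k with
      | zero => intro hk; rfl
      | succ n ih =>
        intro hk
        have hn : n < d + 1 := Nat.lt_of_succ_lt hk
        have hstep := hadj ⟨n+1, hk⟩ ⟨n, hn⟩ (by
          simp only [Fin.val_mk]
          omega)
        rw [hstep, ih hn]
    intro i
    have : i = ⟨i.1, i.2⟩ := rfl
    rw [this, main i.1 i.2]
  refine ⟨c 0, ?_⟩
  calc H = 1 * H := (one_mul _).symm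
    _ = (∑ i, L.E i) * H := by rw [L.E_sum]
    _ = ∑ i, L.E i * H := by rw [Finset.sum_mul]
    _ = ∑ i, c 0 • L.E i := by
        exact Finset.sum_congr rfl fun i _ => by rw [hEH i, hall i]
    _ = c 0 • ∑ i, L.E i := by rw [Finset.smul_sum]
    _ = c 0 • 1 := by rw [L.E_sum]

private lemma sigma_fixes_Estar (L : LeonardSystem K d)
    (σ : (Matrix (Fin (d+1)) (Fin (d+1)) K) →ₗ[K] Matrix (Fin (d+1)) (Fin (d+1)) K)
    (hanti : ∀ X Y, σ (X * Y) = σ Y * σ X) (hsurj : Function.Surjective σ)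
    (hAs : σ L.Astar = L.Astar) (j : Fin (d+1)) : σ (L.Estar j) = L.Estar j := by
  classical
  have hσ1 : σ 1 = 1 := by
    obtain ⟨Y, hY⟩ := hsurj 1
    have h := hanti Y 1
    rw [mul_one, hY, mul_one] at h
    exact h.symm
  have hAsE := fun i => (mul_idem_left L.Estar L.θs L.Es_mul L.Astar L.As_eq i).1
  have hEAs := fun i => (mul_idem_left L.Estar L.θs L.Es_mul L.Astar L.As_eq i).2
  have hl : ∀ i, L.Astar * σ (L.Estar i) = L.θs i • σ (L.Estar i) := by
    intro i
    have h := hanti (L.Estar i) L.Astar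
    rw [hEAs i, LinearMap.map_smul, hAs] at h
    exact h.symm
  have hr : ∀ i, σ (L.Estar i) * L.Astar = L.θs i • σ (L.Estar i) := by
    intro i
    have h := hanti L.Astar (L.Estar i)
    rw [hAsE i, LinearMap.map_smul, hAs] at h
    exact h.symm
  have hcross : ∀ i k, i ≠ k → L.Estar i * σ (L.Estar k) = 0 := by
    intro i k hik
    have key : L.θs i • (L.Estar i * σ (L.Estar k))
        = L.θs k • (L.Estar i * σ (L.Estar k)) := by
      calc L.θs i • (L.Estar i * σ (L.Estar k))
          = (L.θs i • L.Estar i) * σ (L.Estar k) := by rw [smul_mul_assoc]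
        _ = (L.Estar i * L.Astar) * σ (L.Estar k) := by rw [hEAs i]
        _ = L.Estar i * (L.Astar * σ (L.Estar k)) := by rw [mul_assoc]
        _ = L.Estar i * (L.θs k • σ (L.Estar k)) := by rw [hl k]
        _ = L.θs k • (L.Estar i * σ (L.Estar k)) := by rw [mul_smul_comm]
    have hθ : L.θs i - L.θs k ≠ 0 := sub_ne_zero.mpr fun h => hik (L.θs_inj h)
    have h0 : (L.θs i - L.θs k) • (L.Estar i * σ (L.Estar k)) = 0 := by
      rw [sub_smul, key, sub_self]
    rcases smul_eq_zero.mp h0 with h | h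
    · exact absurd h hθ
    · exact h
  have hsumσ : ∑ i, σ (L.Estar i) = 1 := by
    rw [← map_sum, L.Es_sum, hσ1]
  have h1 : σ (L.Estar j) = L.Estar j * σ (L.Estar j) := by
    calc σ (L.Estar j) = 1 * σ (L.Estar j) := (one_mul _).symm
      _ = (∑ i, L.Estar i) * σ (L.Estar j) := by rw [L.Es_sum]
      _ = ∑ i, L.Estar i * σ (L.Estar j) := by rw [Finset.sum_mul]
      _ = L.Estar j * σ (L.Estar j) := by
          rw [Finset.sum_eq_single j (fun k _ hk => hcross k j hk) (by simp)]
  have h2 : L.Estar j = L.Estar j * σ (L.Estar j) := by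
    calc L.Estar j = L.Estar j * 1 := (mul_one _).symm
      _ = L.Estar j * ∑ i, σ (L.Estar i) := by rw [hsumσ]
      _ = ∑ i, L.Estar j * σ (L.Estar i) := by rw [Finset.mul_sum]
      _ = L.Estar j * σ (L.Estar j) := by
          rw [Finset.sum_eq_single j (fun k _ hk => hcross j k (Ne.symm hk)) (by simp)]
  rw [h1, ← h2]

end AuxBilin
/-- The bilinear form associated with the antiautomorphism `†` of a Leonard
system is symmetric. -/
theorem LeonardSystem.bilin_symm {K : Type*} [Field K] {d : ℕ}
    (L : LeonardSystem K d)
    (σ : (Matrix (Fin (d+1)) (Fin (d+1)) K) →ₗ[K] Matrix (Fin (d+1)) (Fin (d+1)) K)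
    (hanti : ∀ X Y, σ (X * Y) = σ Y * σ X) (hbij : Function.Bijective σ)
    (hA : σ L.A = L.A) (hAs : σ L.Astar = L.Astar)
    (B : (Fin (d+1) → K) →ₗ[K] (Fin (d+1) → K) →ₗ[K] K) (hB : B ≠ 0)
    (hcomp : ∀ (X : Matrix (Fin (d+1)) (Fin (d+1)) K) (u v : Fin (d+1) → K),
      B (X.mulVec u) v = B u ((σ X).mulVec v)) :
    ∀ u v, B u v = B v u := by
  classical
  set G : Matrix (Fin (d+1)) (Fin (d+1)) K :=
    Matrix.of fun i j => B (Pi.single i 1) (Pi.single j 1) with hGdef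
  -- B in terms of G
  have hG : ∀ u v, B u v = u ⬝ᵥ G *ᵥ v := by
    intro u v
    have hu : u = ∑ i, u i • (Pi.single i 1 : Fin (d+1) → K) := by
      ext j; simp [Finset.sum_apply, Pi.single_apply]
    have hv : v = ∑ i, v i • (Pi.single i 1 : Fin (d+1) → K) := by
      ext j; simp [Finset.sum_apply, Pi.single_apply]
    conv_lhs => rw [hu, hv]
    rw [map_sum B]
    simp only [LinearMap.map_smul, LinearMap.sum_apply, LinearMap.smul_apply, map_sum,
      smul_eq_mul]
    simp only [Matrix.mulVec, dotProduct, Matrix.of_apply, Finset.mul_sum, hGdef]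
    rw [Finset.sum_comm]
    exact Finset.sum_congr rfl fun i _ => Finset.sum_congr rfl fun j _ => by ring
  -- the key adjoint identity in matrix form
  have KEY : ∀ X : Matrix (Fin (d+1)) (Fin (d+1)) K, Xᵀ * G = G * σ X := by
    intro X
    ext a b
    have h := hcomp X (Pi.single a 1) (Pi.single b 1)
    rw [hG, hG, Matrix.mulVec_mulVec] at h
    simpa [Matrix.mulVec_single, dotProduct, Matrix.mul_apply,
      Matrix.transpose_apply, Pi.single_apply, ite_mul, one_mul, zero_mul,
      Finset.sum_ite_eq, Finset.sum_ite_eq'] using h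
  -- G is nonzero
  have hGne : G ≠ 0 := by
    intro h0
    apply hB
    apply LinearMap.ext; intro u; apply LinearMap.ext; intro v
    rw [hG u v, h0]
    simp
  -- G is invertible
  have hker : ∀ v, G *ᵥ v = 0 → v = 0 := by
    intro v hv
    by_contra hv0
    obtain ⟨k, hk0⟩ := Function.ne_iff.mp hv0
    have hk : v k ≠ 0 := by simpa using hk0
    have hall : ∀ u, G *ᵥ u = 0 := by
      intro u
      set Y : Matrix (Fin (d+1)) (Fin (d+1)) K :=
        Matrix.vecMulVec u (Pi.single k (v k)⁻¹) with hY
      have hYv : Y *ᵥ v = u := by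
        ext a
        rw [hY, vecMulVec_mulVec', single_dotProduct,
          inv_mul_cancel₀ hk, one_smul]
      obtain ⟨X, hX⟩ := hbij.2 Y
      calc G *ᵥ u = G *ᵥ (Y *ᵥ v) := by rw [hYv]
        _ = (G * Y) *ᵥ v := by rw [Matrix.mulVec_mulVec]
        _ = (Xᵀ * G) *ᵥ v := by rw [KEY X, hX]
        _ = Xᵀ *ᵥ (G *ᵥ v) := by rw [Matrix.mulVec_mulVec]
        _ = 0 := by rw [hv, Matrix.mulVec_zero]
    apply hGne
    ext a b
    have := congrFun (hall (Pi.single b 1)) a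
    simpa [Matrix.mulVec_single] using this
  have hinj : Function.Injective G.mulVec := by
    intro x y hxy
    have : G *ᵥ (x - y) = 0 := by rw [Matrix.mulVec_sub, hxy, sub_self]
    have := hker _ this
    exact sub_eq_zero.mp this
  have hunit : IsUnit G := Matrix.mulVec_injective_iff_isUnit.mp hinj
  have hdet : IsUnit G.det := (Matrix.isUnit_iff_isUnit_det G).mp hunit
  have hGiG : G⁻¹ * G = 1 := Matrix.nonsing_inv_mul G hdet
  have hGGi : G * G⁻¹ = 1 := Matrix.mul_nonsing_inv G hdet
  -- commutation relations
  have comm : ∀ M : Matrix (Fin (d+1)) (Fin (d+1)) K, Mᵀ * G = G * M →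
      (G⁻¹ * Gᵀ) * M = M * (G⁻¹ * Gᵀ) := by
    intro M h1
    have h2 : Gᵀ * M = Mᵀ * Gᵀ := by
      have := congrArg Matrix.transpose h1
      rw [Matrix.transpose_mul, Matrix.transpose_mul, Matrix.transpose_transpose] at this
      exact this
    have h3 : G⁻¹ * Mᵀ = M * G⁻¹ := by
      calc G⁻¹ * Mᵀ = G⁻¹ * Mᵀ * (G * G⁻¹) := by rw [hGGi, mul_one]
        _ = G⁻¹ * (Mᵀ * G) * G⁻¹ := by
            rw [← mul_assoc, mul_assoc G⁻¹ Mᵀ G]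
        _ = G⁻¹ * (G * M) * G⁻¹ := by rw [h1]
        _ = (G⁻¹ * G) * (M * G⁻¹) := by
            rw [← mul_assoc, mul_assoc (G⁻¹ * G) M G⁻¹]
        _ = M * G⁻¹ := by rw [hGiG, one_mul]
    calc (G⁻¹ * Gᵀ) * M = G⁻¹ * (Gᵀ * M) := by rw [mul_assoc]
      _ = G⁻¹ * (Mᵀ * Gᵀ) := by rw [h2]
      _ = (G⁻¹ * Mᵀ) * Gᵀ := by rw [mul_assoc]
      _ = (M * G⁻¹) * Gᵀ := by rw [h3]
      _ = M * (G⁻¹ * Gᵀ) := by rw [mul_assoc]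
  have hA1 : L.Aᵀ * G = G * L.A := by rw [KEY L.A, hA]
  have hAs1 : L.Astarᵀ * G = G * L.Astar := by rw [KEY L.Astar, hAs]
  obtain ⟨c, hc⟩ := commutant_scalar L (G⁻¹ * Gᵀ)
    (comm L.A hA1) (comm L.Astar hAs1)
  have hGt : Gᵀ = c • G := by
    calc Gᵀ = (G * G⁻¹) * Gᵀ := by rw [hGGi, one_mul]
      _ = G * (G⁻¹ * Gᵀ) := by rw [mul_assoc]
      _ = G * (c • 1) := by rw [hc]
      _ = c • G := by rw [mul_smul_comm, mul_one]
  -- rank-one idempotent Estar 0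
  obtain ⟨v, w, hwv, hE0⟩ :=
    rankOne_of_orth_idem L.Estar L.Es_mul L.Es_sum L.Es_ne 0
  have hσE0 : σ (L.Estar 0) = L.Estar 0 := sigma_fixes_Estar L σ hanti hbij.2 hAs 0
  have hEG : (L.Estar 0)ᵀ * G = G * L.Estar 0 := by rw [KEY (L.Estar 0), hσE0]
  have hv0 : v ≠ 0 := by
    intro h
    rw [h, dotProduct_zero] at hwv
    exact one_ne_zero hwv.symm
  have hGv : G *ᵥ v ≠ 0 := fun h => hv0 (hker v h)
  obtain ⟨k, hk0⟩ := Function.ne_iff.mp hGv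
  have hk : (G *ᵥ v) k ≠ 0 := by simpa using hk0
  have hE0v : L.Estar 0 *ᵥ v = v := by
    rw [hE0, vecMulVec_mulVec', hwv, one_smul]
  set z : Fin (d+1) → K := Pi.single k 1 with hz
  set t : K := v ⬝ᵥ G *ᵥ v with ht
  have hE0z : L.Estar 0 *ᵥ z = (w ⬝ᵥ z) • v := by
    rw [hE0, vecMulVec_mulVec']
  have hq : (w ⬝ᵥ z) * t = (G *ᵥ v) k := by
    calc (w ⬝ᵥ z) * t = ((w ⬝ᵥ z) • v) ⬝ᵥ (G *ᵥ v) := by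
          rw [smul_dotProduct, ht, smul_eq_mul]
      _ = (L.Estar 0 *ᵥ z) ⬝ᵥ (G *ᵥ v) := by rw [hE0z]
      _ = ((L.Estar 0 *ᵥ z) ᵥ* G) ⬝ᵥ v := by rw [Matrix.dotProduct_mulVec]
      _ = ((z ᵥ* (L.Estar 0)ᵀ) ᵥ* G) ⬝ᵥ v := by rw [Matrix.vecMul_transpose]
      _ = (z ᵥ* ((L.Estar 0)ᵀ * G)) ⬝ᵥ v := by rw [Matrix.vecMul_vecMul]
      _ = (z ᵥ* (G * L.Estar 0)) ⬝ᵥ v := by rw [hEG]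
      _ = z ⬝ᵥ ((G * L.Estar 0) *ᵥ v) := by rw [Matrix.dotProduct_mulVec]
      _ = z ⬝ᵥ (G *ᵥ (L.Estar 0 *ᵥ v)) := by rw [Matrix.mulVec_mulVec]
      _ = z ⬝ᵥ (G *ᵥ v) := by rw [hE0v]
      _ = (G *ᵥ v) k := by rw [hz, single_dotProduct, one_mul]
  have ht0 : t ≠ 0 := by
    intro h
    rw [h, mul_zero] at hq
    exact hk hq.symm
  have hct : c * t = t := by
    have h1 : v ⬝ᵥ Gᵀ *ᵥ v = t := by
      rw [Matrix.mulVec_transpose, dotProduct_comm, ← Matrix.dotProduct_mulVec]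
    rw [hGt] at h1
    rw [Matrix.smul_mulVec, dotProduct_smul, smul_eq_mul] at h1
    exact h1
  have hc1 : c = 1 := by
    have := mul_right_cancel₀ ht0 (by rw [hct, one_mul] : c * t = 1 * t)
    exact this
  have hGsymm : Gᵀ = G := by rw [hGt, hc1, one_smul]
  -- conclude
  intro u v'
  rw [hG, hG]
  calc u ⬝ᵥ G *ᵥ v' = (G *ᵥ v') ⬝ᵥ u := dotProduct_comm _ _
    _ = (v' ᵥ* Gᵀ) ⬝ᵥ u := by rw [Matrix.vecMul_transpose]
    _ = (v' ᵥ* G) ⬝ᵥ u := by rw [hGsymm]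
    _ = v' ⬝ᵥ G *ᵥ u := by rw [Matrix.dotProduct_mulVec]
end

section
/- Let Φ be a Leonard system with bilinear form ⟨·,·⟩ and nonzero vectors ξ_0 ∈ E_0V, ξ*_0 ∈ E*_0V. Then ⟨ξ_0, ξ*_0⟩² = tr(E_0 E*_0) · ⟨ξ_0, ξ_0⟩ · ⟨ξ*_0, ξ*_0⟩. -/
open Matrix Polynomial

section AuxLemmas

variable {K : Type*} [Field K] {n : ℕ}

open Matrix Module

/-- Each member of a family of `n` nonzero pairwise-orthogonal idempotents in
`Mat_n(K)` summing to `1` has rank one. -/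
lemma orth_idem_finrank_one (E : Fin n → Matrix (Fin n) (Fin n) K)
    (hne : ∀ i, E i ≠ 0)
    (hmul : ∀ i j, E i * E j = if i = j then E i else 0)
    (hsum : ∑ i, E i = 1) (i : Fin n) :
    Module.finrank K (LinearMap.range (E i).mulVecLin) = 1 := by
  set W : Fin n → Submodule K (Fin n → K) :=
    fun i => LinearMap.range (E i).mulVecLin with hW
  -- independence
  have hWker : ∀ i j : Fin n, j ≠ i → W j ≤ LinearMap.ker (E i).mulVecLin := by
    intro i j hji x hx
    obtain ⟨y, rfl⟩ := hx
    have : E i * E j = 0 := by rw [hmul]; simp [(Ne.symm hji)]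
    simp [LinearMap.mem_ker, Matrix.mulVecLin_apply, Matrix.mulVec_mulVec, this]
  have hind : iSupIndep W := by
    intro i
    refine Submodule.disjoint_def.mpr fun x hxi hxs => ?_
    have hker : x ∈ LinearMap.ker (E i).mulVecLin := by
      have hle : (⨆ (j) (_ : j ≠ i), W j) ≤ LinearMap.ker (E i).mulVecLin :=
        iSup₂_le fun j hj => hWker i j hj
      exact hle hxs
    obtain ⟨y, rfl⟩ := hxi
    have hid : E i * E i = E i := by rw [hmul]; simp
    have : (E i).mulVec ((E i).mulVec y) = 0 := hker
    rwa [Matrix.mulVec_mulVec, hid] at this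
  -- the ranges span everything
  have htop : (⨆ j, W j) = ⊤ := by
    rw [eq_top_iff]
    intro v _
    have hv : v = ∑ j, (E j).mulVec v := by
      have : (∑ j, E j) *ᵥ v = ∑ j, (E j) *ᵥ v := by
        induction (Finset.univ : Finset (Fin n)) using Finset.induction with
        | empty => simp [Matrix.zero_mulVec]
        | insert h ih => simp_all [Matrix.add_mulVec]
      rw [← this, hsum, Matrix.one_mulVec]
    rw [hv]
    exact Submodule.sum_mem _ fun j _ =>
      (le_iSup W j) ⟨v, rfl⟩
  -- finrank additivity
  have hInternal := DirectSum.isInternal_submodule_of_iSupIndep_of_iSup_eq_top hind htop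
  have hfr : ∑ j, finrank K (W j) = n := by
    have h1 := (LinearEquiv.ofBijective (DirectSum.coeLinearMap W) hInternal).finrank_eq
    rw [Module.finrank_directSum] at h1
    rw [h1]
    simp [Module.finrank_pi]
  have hpos : ∀ j, 1 ≤ finrank K (W j) := by
    intro j
    rcases Nat.eq_zero_or_pos (finrank K (W j)) with h0 | h1
    · exfalso
      have : W j = ⊥ := Submodule.finrank_eq_zero.mp h0
      apply hne j
      ext a b
      have hb : (E j).mulVec (Pi.single b 1) ∈ W j := ⟨Pi.single b 1, rfl⟩
      rw [this, Submodule.mem_bot] at hb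
      have := congrFun hb a
      simpa using this
    · exact h1
  -- conclude
  by_contra hne1
  have h2 : 2 ≤ finrank K (W i) := Nat.lt_of_le_of_ne (hpos i) (Ne.symm hne1)
  have hrest : (Finset.univ.erase i).card ≤ ∑ j ∈ Finset.univ.erase i, finrank K (W j) := by
    simpa using Finset.card_nsmul_le_sum (Finset.univ.erase i)
      (fun j => finrank K (W j)) 1 (fun j _ => hpos j)
  have hsplit : finrank K (W i) + ∑ j ∈ Finset.univ.erase i, finrank K (W j)
      = ∑ j, finrank K (W j) := Finset.add_sum_erase _ (fun j => finrank K (W j)) (Finset.mem_univ i)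
  have hcard : (Finset.univ.erase i).card = n - 1 := by
    rw [Finset.card_erase_of_mem (Finset.mem_univ i)]; simp
  have hn1 : 1 ≤ n := Nat.one_le_iff_ne_zero.mpr (by rintro rfl; exact i.elim0)
  have hcontra : n + 1 ≤ n := by
    calc n + 1 = 2 + (n - 1) := by omega
    _ ≤ finrank K (W i) + ∑ j ∈ Finset.univ.erase i, finrank K (W j) := by
        refine Nat.add_le_add h2 ?_
        rw [← hcard]; exact hrest
    _ = ∑ j, finrank K (W j) := hsplit
    _ = n := hfr
  omega

/-- A rank-one matrix fixing a nonzero vector `v` decomposes as `E a b = v a * w b`. -/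
lemma rank_one_decomp (M : Matrix (Fin n) (Fin n) K)
    (hrank : Module.finrank K (LinearMap.range M.mulVecLin) = 1)
    (v : Fin n → K) (hv : v ≠ 0) (hfix : M.mulVec v = v) :
    ∃ w : Fin n → K, ∀ a b, M a b = v a * w b := by
  have hmem : v ∈ LinearMap.range M.mulVecLin := ⟨v, hfix⟩
  have hspan : (Submodule.span K {v} : Submodule K (Fin n → K))
      = LinearMap.range M.mulVecLin := by
    apply Submodule.eq_of_le_of_finrank_le
    · rw [Submodule.span_le, Set.singleton_subset_iff]; exact hmem
    · rw [hrank, finrank_span_singleton hv]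
  have hcol : ∀ b : Fin n, ∃ c : K, M.mulVec (Pi.single b 1) = c • v := by
    intro b
    have : M.mulVec (Pi.single b 1) ∈ Submodule.span K {v} := by
      rw [hspan]; exact ⟨Pi.single b 1, rfl⟩
    obtain ⟨c, hc⟩ := Submodule.mem_span_singleton.mp this
    exact ⟨c, hc.symm⟩
  choose w hw using hcol
  refine ⟨w, fun a b => ?_⟩
  have := congrFun (hw b) a
  simp only [Matrix.mulVec_single, mul_one, Pi.smul_apply, smul_eq_mul] at this
  rw [mul_comm]; simpa using this

/-- An antiautomorphism fixing a multiplicity-free `M` fixes each rank-one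
primitive idempotent of `M`. -/
lemma sigma_fix_idem
    (σ : (Matrix (Fin n) (Fin n) K) →ₗ[K] Matrix (Fin n) (Fin n) K)
    (hanti : ∀ X Y, σ (X * Y) = σ Y * σ X) (hinj : Function.Injective σ)
    (M : Matrix (Fin n) (Fin n) K) (hM : σ M = M)
    (θv : Fin n → K) (hθ : Function.Injective θv)
    (E : Fin n → Matrix (Fin n) (Fin n) K)
    (hne : ∀ i, E i ≠ 0)
    (hmul : ∀ i j, E i * E j = if i = j then E i else 0)
    (hsum : ∑ i, E i = 1)
    (hMeq : M = ∑ i, θv i • E i)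
    (i : Fin n) (v w : Fin n → K) (hdec : ∀ a b, E i a b = v a * w b) :
    σ (E i) = E i := by
  have hid : ∀ j, E j * E j = E j := fun j => by rw [hmul]; simp
  have hME : ∀ j, M * E j = θv j • E j := by
    intro j
    rw [hMeq, Finset.sum_mul]
    rw [Finset.sum_eq_single j]
    · rw [Matrix.smul_mul, hid]
    · intro k _ hk
      rw [Matrix.smul_mul, hmul]
      simp [hk]
    · simp
  have hEM : ∀ j, E j * M = θv j • E j := by
    intro j
    rw [hMeq, Finset.mul_sum]
    rw [Finset.sum_eq_single j]
    · rw [Matrix.mul_smul, hid]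
    · intro k _ hk
      rw [Matrix.mul_smul, hmul]
      simp [Ne.symm hk]
    · simp
  set F := σ (E i) with hF
  have hFM : F * M = θv i • F := by
    have := congrArg σ (hME i)
    rwa [hanti, hM, LinearMap.map_smul] at this
  have hMF : M * F = θv i • F := by
    have := congrArg σ (hEM i)
    rwa [hanti, hM, LinearMap.map_smul] at this
  have hEjF : ∀ j, j ≠ i → E j * F = 0 := by
    intro j hj
    have h1 : E j * (M * F) = θv i • (E j * F) := by rw [hMF, Matrix.mul_smul]
    have h2 : E j * (M * F) = θv j • (E j * F) := by
      rw [← mul_assoc, hEM, Matrix.smul_mul]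
    have h3 : (θv j - θv i) • (E j * F) = 0 := by
      rw [sub_smul, ← h2, h1, sub_self]
    rcases smul_eq_zero.mp h3 with h | h
    · exact absurd (hθ (sub_eq_zero.mp h)) hj
    · exact h
  have hEF : E i * F = F := by
    have h1 : (∑ j, E j) * F = F := by rw [hsum, one_mul]
    rw [Finset.sum_mul, Finset.sum_eq_single i] at h1
    · exact h1
    · intro k _ hk; exact hEjF k hk
    · simp
  have hFEj : ∀ j, j ≠ i → F * E j = 0 := by
    intro j hj
    have h1 : (F * M) * E j = θv i • (F * E j) := by rw [hFM, Matrix.smul_mul]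
    have h2 : (F * M) * E j = θv j • (F * E j) := by
      rw [mul_assoc, hME, Matrix.mul_smul]
    have h3 : (θv j - θv i) • (F * E j) = 0 := by
      rw [sub_smul, ← h2, h1, sub_self]
    rcases smul_eq_zero.mp h3 with h | h
    · exact absurd (hθ (sub_eq_zero.mp h)) hj
    · exact h
  have hFE : F * E i = F := by
    have h1 : F * (∑ j, E j) = F := by rw [hsum, mul_one]
    rw [Finset.mul_sum, Finset.sum_eq_single i] at h1
    · exact h1
    · intro k _ hk; exact hFEj k hk
    · simp
  -- F = s • E i for a scalar s
  have hg : ∀ a b, F a b = v a * (∑ j, w j * F j b) := by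
    intro a b
    conv_lhs => rw [← hEF]
    simp only [Matrix.mul_apply, hdec]
    rw [Finset.mul_sum]
    exact Finset.sum_congr rfl fun j _ => by ring
  set s : K := ∑ k, (∑ j, w j * F j k) * v k with hs
  have hFsE : F = s • E i := by
    ext a b
    conv_lhs => rw [← hFE]
    simp only [Matrix.mul_apply, Matrix.smul_apply, smul_eq_mul, hdec, hs]
    rw [Finset.sum_mul]
    refine Finset.sum_congr rfl fun k _ => ?_
    rw [hg a k]
    ring
  -- F is idempotent
  have hFidem : F * F = F := by
    have := congrArg σ (hid i)
    rwa [hanti] at this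
  have hs2 : (s * s - s) • E i = 0 := by
    have h1 : (s • E i) * (s • E i) = s • E i := by rw [← hFsE]; exact hFidem
    rw [Matrix.smul_mul, Matrix.mul_smul, hid, smul_smul] at h1
    rw [sub_smul, h1, sub_self]
  have hsval : s = 1 := by
    rcases smul_eq_zero.mp hs2 with h | h
    · have h' : s * (s - 1) = 0 := by linear_combination h
      rcases mul_eq_zero.mp h' with h0 | h1
      · exfalso
        have hF0 : F = 0 := by rw [hFsE, h0, zero_smul]
        have : σ (E i) = σ 0 := by rw [← hF, hF0]; exact (map_zero σ).symm
        exact hne i (hinj this)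
      · exact sub_eq_zero.mp h1
    · exact absurd h (hne i)
  rw [hFsE, hsval, one_smul]

end AuxLemmas

/-- `⟨ξ_0,ξ*_0⟩² = tr(E_0E*_0) ⟨ξ_0,ξ_0⟩ ⟨ξ*_0,ξ*_0⟩`. -/
theorem LeonardSystem.bilin_sq {K : Type*} [Field K] {d : ℕ}
    (L : LeonardSystem K d)
    (σ : (Matrix (Fin (d+1)) (Fin (d+1)) K) →ₗ[K] Matrix (Fin (d+1)) (Fin (d+1)) K)
    (hanti : ∀ X Y, σ (X * Y) = σ Y * σ X) (hbij : Function.Bijective σ)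
    (hA : σ L.A = L.A) (hAs : σ L.Astar = L.Astar)
    (B : (Fin (d+1) → K) →ₗ[K] (Fin (d+1) → K) →ₗ[K] K) (hB : B ≠ 0)
    (hcomp : ∀ (X : Matrix (Fin (d+1)) (Fin (d+1)) K) (u v : Fin (d+1) → K),
      B (X.mulVec u) v = B u ((σ X).mulVec v))
    (ξ0 ξs0 : Fin (d+1) → K) (hξ0 : ξ0 ≠ 0) (hξs0 : ξs0 ≠ 0)
    (hE0 : (L.E 0).mulVec ξ0 = ξ0) (hEs0 : (L.Estar 0).mulVec ξs0 = ξs0) :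
    (B ξ0 ξs0) ^ 2 = (L.E 0 * L.Estar 0).trace * (B ξ0 ξ0 * B ξs0 ξs0) := by
  classical
  -- rank-one decompositions of E 0 and Estar 0
  have hrE := orth_idem_finrank_one L.E L.E_ne L.E_mul L.E_sum 0
  have hrEs := orth_idem_finrank_one L.Estar L.Es_ne L.Es_mul L.Es_sum 0
  obtain ⟨w, hw⟩ := rank_one_decomp (L.E 0) hrE ξ0 hξ0 hE0
  obtain ⟨ws, hws⟩ := rank_one_decomp (L.Estar 0) hrEs ξs0 hξs0 hEs0
  -- σ fixes E 0 and Estar 0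
  have hσE : σ (L.E 0) = L.E 0 :=
    sigma_fix_idem σ hanti hbij.1 L.A hA L.θ L.θ_inj L.E L.E_ne L.E_mul L.E_sum
      L.A_eq 0 ξ0 w hw
  have hσEs : σ (L.Estar 0) = L.Estar 0 :=
    sigma_fix_idem σ hanti hbij.1 L.Astar hAs L.θs L.θs_inj L.Estar L.Es_ne L.Es_mul
      L.Es_sum L.As_eq 0 ξs0 ws hws
  -- scalars
  set a : K := ∑ j, w j * ξs0 j with ha
  set b : K := ∑ j, ws j * ξ0 j with hb
  have hEv : (L.E 0).mulVec ξs0 = a • ξ0 := by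
    ext i
    simp only [Matrix.mulVec, dotProduct, Pi.smul_apply, smul_eq_mul, ha]
    rw [Finset.sum_mul]
    exact Finset.sum_congr rfl fun j _ => by rw [hw i j]; ring
  have hEsv : (L.Estar 0).mulVec ξ0 = b • ξs0 := by
    ext i
    simp only [Matrix.mulVec, dotProduct, Pi.smul_apply, smul_eq_mul, hb]
    rw [Finset.sum_mul]
    exact Finset.sum_congr rfl fun j _ => by rw [hws i j]; ring
  have htr : (L.E 0 * L.Estar 0).trace = a * b := by
    simp only [Matrix.trace, Matrix.diag, Matrix.mul_apply, ha, hb]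
    rw [Finset.sum_mul_sum, Finset.sum_comm]
    refine Finset.sum_congr rfl fun j _ => Finset.sum_congr rfl fun i _ => ?_
    rw [hw i j, hws j i]
    ring
  -- bilinear form computations
  have h1 : B ξ0 ξs0 = b * (B ξs0 ξs0) := by
    have e1 : B ((L.Estar 0).mulVec ξ0) ξs0 = B ξ0 ((L.Estar 0).mulVec ξs0) := by
      rw [hcomp, hσEs]
    rw [hEs0, hEsv] at e1
    rw [← e1]
    simp [smul_eq_mul]
  have h2 : B ξ0 ξs0 = a * (B ξ0 ξ0) := by
    have e2 : B ((L.E 0).mulVec ξ0) ξs0 = B ξ0 ((L.E 0).mulVec ξs0) := by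
      rw [hcomp, hσE]
    rw [hE0, hEv] at e2
    rw [e2]
    simp [smul_eq_mul]
  rw [htr, sq]
  nth_rewrite 1 [h2]
  nth_rewrite 1 [h1]
  ring
end

section
/- Let Φ be a Leonard system with parameter array ({θ_i}; {θ*_i}; {φ_i}; {ϕ_i}), φ = φ_1⋯φ_d, ϕ = ϕ_1⋯ϕ_d, bilinear form ⟨·,·⟩, and nonzero vectors ξ_0 ∈ E_0V, ξ_d ∈ E_dV, ξ*_0 ∈ E*_0V, ξ*_d ∈ E*_dV. Then ⟨ξ_0,ξ*_0⟩/⟨ξ_0,ξ*_d⟩ = (ϕ/φ) · ⟨ξ_d,ξ*_0⟩/⟨ξ_d,ξ*_d⟩. -/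
open Matrix Polynomial

namespace LSAux

variable {K : Type*} [Field K] {d : ℕ}

lemma vecMulVec_mulVec (a b x : Fin (d+1) → K) :
    Matrix.vecMulVec a b *ᵥ x = (b ⬝ᵥ x) • a := by
  ext i
  simp only [Matrix.mulVec, dotProduct, Matrix.vecMulVec_apply, Pi.smul_apply,
    smul_eq_mul, Finset.sum_mul]
  exact Finset.sum_congr rfl fun j _ => by ring

lemma trace_mul_vecMulVec (X : Matrix (Fin (d+1)) (Fin (d+1)) K) (a b : Fin (d+1) → K) :
    (X * Matrix.vecMulVec a b).trace = b ⬝ᵥ (X *ᵥ a) := by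
  simp only [Matrix.trace, Matrix.diag, Matrix.mul_apply, Matrix.vecMulVec_apply,
    dotProduct, Matrix.mulVec]
  refine Finset.sum_congr rfl fun j _ => ?_
  rw [Finset.mul_sum]
  exact Finset.sum_congr rfl fun i _ => by ring

lemma vecMulVec_mul_mul_vecMulVec (a b c e : Fin (d+1) → K)
    (X : Matrix (Fin (d+1)) (Fin (d+1)) K) :
    Matrix.vecMulVec a b * X * Matrix.vecMulVec c e
      = (b ⬝ᵥ (X *ᵥ c)) • Matrix.vecMulVec a e := by
  ext i j
  simp only [Matrix.mul_apply, Matrix.vecMulVec_apply, Matrix.smul_apply, dotProduct,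
    Matrix.mulVec, smul_eq_mul, Finset.sum_mul, Finset.mul_sum]
  rw [Finset.sum_comm]
  refine Finset.sum_congr rfl fun s _ => Finset.sum_congr rfl fun t _ => by ring

lemma smul_cancel_of_ne_zero {a b : K} {v : Fin (d+1) → K} (hv : v ≠ 0)
    (h : a • v = b • v) : a = b := by
  by_contra hab
  apply hv
  have : (a - b) • v = 0 := by rw [sub_smul, h, sub_self]
  simpa [sub_ne_zero.2 hab] using smul_eq_zero.1 this

/-- coordinate operator of a matrix in a "basis" encoded by the coefficient matrix `m`. -/
def opC (m : Fin (d+1) → Fin (d+1) → K) (x : Fin (d+1) → K) : Fin (d+1) → K :=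
  fun j => ∑ k, m j k * x k

/-- apply a list of factors `(M - c)` (head outermost) on the coordinate level. -/
def appC (m : Fin (d+1) → Fin (d+1) → K) : List K → (Fin (d+1) → K) → Fin (d+1) → K
  | [], x => x
  | c :: cs, x => opC m (appC m cs x) - c • appC m cs x

/-- `m` with ℕ indices (junk outside range). -/
def mN (m : Fin (d+1) → Fin (d+1) → K) (j k : ℕ) : K :=
  if h : j < d+1 ∧ k < d+1 then m ⟨j, h.1⟩ ⟨k, h.2⟩ else 0

lemma mN_eq (m : Fin (d+1) → Fin (d+1) → K) (j k : ℕ) (hj : j < d+1) (hk : k < d+1) :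
    mN m j k = m ⟨j, hj⟩ ⟨k, hk⟩ := by
  rw [mN, dif_pos ⟨hj, hk⟩]

lemma high (m : Fin (d+1) → Fin (d+1) → K)
    (hm0 : ∀ j k : Fin (d+1), (k : ℕ) + 1 < (j : ℕ) → m j k = 0) :
    ∀ (cs : List K) (i : ℕ) (hid : i + cs.length ≤ d)
      (x : Fin (d+1) → K) (hx : ∀ j : Fin (d+1), i < (j : ℕ) → x j = 0),
      (∀ j : Fin (d+1), i + cs.length < (j : ℕ) → appC m cs x j = 0) ∧
      (∀ j : Fin (d+1), (j : ℕ) = i + cs.length → ∀ j0 : Fin (d+1), (j0 : ℕ) = i →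
        appC m cs x j = (∏ t ∈ Finset.range cs.length, mN m (i+t+1) (i+t)) * x j0) := by
  intro cs
  induction cs with
  | nil =>
    intro i hid x hx
    refine ⟨by simpa [appC] using hx, ?_⟩
    intro j hj j0 hj0
    have : j = j0 := Fin.ext (by simpa using hj.trans hj0.symm)
    simp [appC, this]
  | cons c cs ih =>
    intro i hid x hx
    have hlen : (c :: cs).length = cs.length + 1 := rfl
    have hid' : i + cs.length ≤ d := by rw [hlen] at hid; omega
    obtain ⟨hs, hv⟩ := ih i hid' x hx
    have key : ∀ j : Fin (d+1), i + cs.length + 1 ≤ (j : ℕ) →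
        opC m (appC m cs x) j
          = m j ⟨i + cs.length, by omega⟩ * appC m cs x ⟨i + cs.length, by omega⟩ := by
      intro j hj
      rw [opC, Finset.sum_eq_single (⟨i + cs.length, by omega⟩ : Fin (d+1))]
      · intro k _ hk
        rcases lt_or_gt_of_ne (fun h : (k:ℕ) = i + cs.length => hk (Fin.ext h)) with hlt | hgt
        · rw [hm0 j k (by omega), zero_mul]
        · rw [hs k hgt, mul_zero]
      · intro h; exact absurd (Finset.mem_univ _) h
    have happ : ∀ j, appC m (c :: cs) x j
        = opC m (appC m cs x) j - c * appC m cs x j := fun j => rfl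
    constructor
    · intro j hj
      rw [hlen] at hj
      rw [happ, key j (by omega), hm0 j ⟨i + cs.length, by omega⟩ (by simp; omega),
        zero_mul, hs j (by omega), mul_zero, sub_zero]
    · intro j hj j0 hj0
      rw [hlen] at hj
      have hjeq : j = ⟨i + cs.length + 1, by omega⟩ := Fin.ext (by simp; omega)
      have hprod : (∏ t ∈ Finset.range (c :: cs).length, mN m (i+t+1) (i+t))
          = (∏ t ∈ Finset.range cs.length, mN m (i+t+1) (i+t))
            * mN m (i+cs.length+1) (i+cs.length) := by
        rw [hlen, Finset.prod_range_succ]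
      rw [hjeq, happ, key _ (by simp),
        hs ⟨i + cs.length + 1, by omega⟩ (by simp), hv ⟨i + cs.length, by omega⟩ (by simp) j0 hj0,
        hprod, mN_eq m (i+cs.length+1) (i+cs.length) (by omega) (by omega)]
      ring

lemma appC_rev (m : Fin (d+1) → Fin (d+1) → K) (cs : List K) (x : Fin (d+1) → K) :
    appC (fun j k => m j.rev k.rev) cs (fun j => x j.rev) = fun j => appC m cs x j.rev := by
  induction cs with
  | nil => rfl
  | cons c cs ih =>
    funext j
    show opC (fun j k => m j.rev k.rev) (appC _ cs fun j => x j.rev) j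
        - c * (appC _ cs fun j => x j.rev) j = _
    rw [ih]
    have h1 : opC (fun j k => m j.rev k.rev) (fun j => appC m cs x j.rev) j
        = ∑ k, m j.rev k * appC m cs x k := by
      rw [opC]
      exact Fintype.sum_bijective Fin.rev Fin.rev_involutive.bijective _ _ (fun k => rfl)
    rw [h1]
    rfl

set_option maxHeartbeats 2000000 in
lemma low (m : Fin (d+1) → Fin (d+1) → K)
    (hm0 : ∀ j k : Fin (d+1), (j : ℕ) + 1 < (k : ℕ) → m j k = 0)
    (cs : List K) (i : ℕ) (hlen : cs.length ≤ i) (hid : i ≤ d)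
    (x : Fin (d+1) → K) (hx : ∀ j : Fin (d+1), (j : ℕ) < i → x j = 0) :
    (∀ j : Fin (d+1), (j : ℕ) < i - cs.length → appC m cs x j = 0) ∧
    (∀ j : Fin (d+1), (j : ℕ) = i - cs.length → ∀ j0 : Fin (d+1), (j0 : ℕ) = i →
      appC m cs x j = (∏ t ∈ Finset.range cs.length, mN m (i-t-1) (i-t)) * x j0) := by
  have hrev : ∀ j : Fin (d+1), ((j.rev : Fin (d+1)) : ℕ) = d - (j : ℕ) := by
    intro j; rw [Fin.val_rev]; omega
  have hm0' : ∀ j k : Fin (d+1), (k : ℕ) + 1 < (j : ℕ) →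
      (fun j k => m j.rev k.rev) j k = 0 := by
    intro j k h
    refine hm0 j.rev k.rev ?_
    rw [hrev, hrev]
    have := j.isLt
    have := k.isLt
    omega
  obtain ⟨Hs, Hv⟩ := high (fun j k => m j.rev k.rev) hm0' cs (d - i) (by omega)
    (fun j => x j.rev)
    (by
      intro j hj
      refine hx j.rev ?_
      rw [hrev]
      have := j.isLt
      omega)
  have htr := appC_rev m cs x
  constructor
  · intro j hj
    have h1 : d - i + cs.length < ((j.rev : Fin (d+1)) : ℕ) := by
      rw [hrev]; have := j.isLt; omega
    have h2 := Hs j.rev h1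
    rw [htr] at h2
    simpa using h2
  · intro j hj j0 hj0
    have h2 := Hv j.rev (by rw [hrev]; omega) j0.rev (by rw [hrev]; omega)
    rw [htr] at h2
    simp only [Fin.rev_rev] at h2
    rw [h2]
    have hcong : (∏ t ∈ Finset.range cs.length,
        mN (fun (j k : Fin (d+1)) => m j.rev k.rev) (d - i + t + 1) (d - i + t))
        = ∏ t ∈ Finset.range cs.length, mN m (i-t-1) (i-t) := by
      refine Finset.prod_congr rfl fun t ht => ?_
      have ht' : t < cs.length := Finset.mem_range.1 ht
      rw [mN_eq (fun (j k : Fin (d+1)) => m j.rev k.rev) (d-i+t+1) (d-i+t)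
          (by omega) (by omega),
        mN_eq m (i-t-1) (i-t) (by omega) (by omega)]
      show m (Fin.rev _) (Fin.rev _) = _
      have e1 : Fin.rev (⟨d - i + t + 1, by omega⟩ : Fin (d+1)) = ⟨i - t - 1, by omega⟩ := by
        apply Fin.ext; rw [Fin.val_rev]; simp only [Fin.val_mk]; omega
      have e2 : Fin.rev (⟨d - i + t, by omega⟩ : Fin (d+1)) = ⟨i - t, by omega⟩ := by
        apply Fin.ext; rw [Fin.val_rev]; simp only [Fin.val_mk]; omega
      rw [e1, e2]
    rw [hcong]

lemma chain_high_ne_zero (m : Fin (d+1) → Fin (d+1) → K)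
    (hm1 : ∀ j k : Fin (d+1), (j : ℕ) = (k : ℕ) + 1 → m j k ≠ 0)
    (i len : ℕ) (h : i + len ≤ d) :
    (∏ t ∈ Finset.range len, mN m (i+t+1) (i+t)) ≠ 0 := by
  rw [Finset.prod_ne_zero_iff]
  intro t ht
  have ht' : t < len := Finset.mem_range.1 ht
  rw [mN_eq m _ _ (by omega) (by omega)]
  exact hm1 _ _ (by simp)

lemma chain_low_ne_zero (m : Fin (d+1) → Fin (d+1) → K)
    (hm1 : ∀ j k : Fin (d+1), (j : ℕ) + 1 = (k : ℕ) → m j k ≠ 0)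
    (i len : ℕ) (hlen : len ≤ i) (h : i ≤ d) :
    (∏ t ∈ Finset.range len, mN m (i-t-1) (i-t)) ≠ 0 := by
  rw [Finset.prod_ne_zero_iff]
  intro t ht
  have ht' : t < len := Finset.mem_range.1 ht
  rw [mN_eq m _ _ (by omega) (by omega)]
  exact hm1 _ _ (by simp; omega)

def matP (M : Matrix (Fin (d+1)) (Fin (d+1)) K) : List K → Matrix (Fin (d+1)) (Fin (d+1)) K
  | [] => 1
  | c :: cs => (M - c • 1) * matP M cs

lemma matP_nil (M : Matrix (Fin (d+1)) (Fin (d+1)) K) : matP M [] = 1 := rfl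

lemma matP_cons (M : Matrix (Fin (d+1)) (Fin (d+1)) K) (c : K) (cs : List K) :
    matP M (c :: cs) = (M - c • 1) * matP M cs := rfl

lemma matP_append_singleton (M : Matrix (Fin (d+1)) (Fin (d+1)) K) (cs : List K) (c : K) :
    matP M (cs ++ [c]) = matP M cs * (M - c • 1) := by
  induction cs with
  | nil => rw [List.nil_append, matP_cons, matP_nil, one_mul, mul_one]
  | cons c' cs ih => rw [List.cons_append, matP_cons, ih, matP_cons, mul_assoc]

lemma matP_cons_mulVec (M : Matrix (Fin (d+1)) (Fin (d+1)) K) (c : K) (cs : List K)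
    (v : Fin (d+1) → K) :
    matP M (c :: cs) *ᵥ v = M *ᵥ (matP M cs *ᵥ v) - c • (matP M cs *ᵥ v) := by
  rw [matP_cons, ← Matrix.mulVec_mulVec, Matrix.sub_mulVec, Matrix.smul_mulVec,
    Matrix.one_mulVec]

lemma matP_mulVec_eig (M : Matrix (Fin (d+1)) (Fin (d+1)) K) (μ : K) (ψ : Fin (d+1) → K)
    (h : M *ᵥ ψ = μ • ψ) (cs : List K) :
    matP M cs *ᵥ ψ = (cs.map (fun c => μ - c)).prod • ψ := by
  induction cs with
  | nil => rw [matP_nil, Matrix.one_mulVec, List.map_nil, List.prod_nil, one_smul]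
  | cons c cs ih =>
    rw [matP_cons_mulVec, ih, Matrix.mulVec_smul, h, smul_smul, smul_smul, ← sub_smul,
      List.map_cons, List.prod_cons]
    congr 1
    ring

lemma sub_smul_one_comm (M : Matrix (Fin (d+1)) (Fin (d+1)) K) (a b : K) :
    (M - a • 1) * (M - b • 1) = (M - b • 1) * (M - a • 1) := by
  have h : ∀ a b : K, (M - a • (1 : Matrix (Fin (d+1)) (Fin (d+1)) K)) * (M - b • 1)
      = M * M - b • M - a • M + (a*b) • 1 := by
    intro a b
    rw [sub_mul, mul_sub, mul_sub, mul_smul_comm, mul_one, smul_mul_assoc, one_mul,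
      smul_mul_assoc, one_mul, smul_smul]
    module
  rw [h a b, h b a, mul_comm a b]
  module

lemma matP_comm (M : Matrix (Fin (d+1)) (Fin (d+1)) K) (cs : List K) (c : K) :
    matP M cs * (M - c • 1) = (M - c • 1) * matP M cs := by
  induction cs with
  | nil => rw [matP_nil, one_mul, mul_one]
  | cons c' cs ih =>
    rw [matP_cons, mul_assoc, ih, ← mul_assoc, sub_smul_one_comm, mul_assoc]

lemma sigma_matP (σ : Matrix (Fin (d+1)) (Fin (d+1)) K →ₗ[K] Matrix (Fin (d+1)) (Fin (d+1)) K)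
    (hanti : ∀ X Y, σ (X * Y) = σ Y * σ X) (hone : σ 1 = 1)
    (M : Matrix (Fin (d+1)) (Fin (d+1)) K) (hM : σ M = M) (cs : List K) :
    σ (matP M cs) = matP M cs := by
  induction cs with
  | nil => rw [matP_nil, hone]
  | cons c cs ih =>
    rw [matP_cons, hanti, ih, map_sub, hM, LinearMap.map_smul, hone, matP_comm]

lemma sum_smul_idem_mul (F : Fin (d+1) → Matrix (Fin (d+1)) (Fin (d+1)) K)
    (horth : ∀ i j, F i * F j = if i = j then F i else 0) (μ : Fin (d+1) → K) (k : Fin (d+1)) :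
    (∑ i, μ i • F i) * F k = μ k • F k := by
  rw [Finset.sum_mul]
  rw [Finset.sum_eq_single k]
  · rw [smul_mul_assoc, horth k k, if_pos rfl]
  · intro i _ hik
    rw [smul_mul_assoc, horth i k, if_neg hik, smul_zero]
  · intro h; exact absurd (Finset.mem_univ _) h

lemma matP_mul_idem (F : Fin (d+1) → Matrix (Fin (d+1)) (Fin (d+1)) K)
    (horth : ∀ i j, F i * F j = if i = j then F i else 0) (μ : Fin (d+1) → K)
    (M : Matrix (Fin (d+1)) (Fin (d+1)) K) (hM : M = ∑ i, μ i • F i) (cs : List K)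
    (k : Fin (d+1)) :
    matP M cs * F k = ((cs.map (fun c => μ k - c)).prod) • F k := by
  induction cs with
  | nil => rw [matP_nil, one_mul, List.map_nil, List.prod_nil, one_smul]
  | cons c cs ih =>
    rw [matP_cons, mul_assoc, ih, mul_smul_comm, sub_mul, smul_mul_assoc, one_mul,
      hM, sum_smul_idem_mul F horth μ k, ← sub_smul, smul_smul,
      List.map_cons, List.prod_cons]
    congr 1
    ring

lemma matP_eq_sum (F : Fin (d+1) → Matrix (Fin (d+1)) (Fin (d+1)) K)
    (horth : ∀ i j, F i * F j = if i = j then F i else 0) (hsum : ∑ i, F i = 1)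
    (μ : Fin (d+1) → K) (M : Matrix (Fin (d+1)) (Fin (d+1)) K) (hM : M = ∑ i, μ i • F i)
    (cs : List K) :
    matP M cs = ∑ k, ((cs.map (fun c => μ k - c)).prod) • F k := by
  conv_lhs => rw [← mul_one (matP M cs), ← hsum]
  rw [Finset.mul_sum]
  exact Finset.sum_congr rfl fun k _ => matP_mul_idem F horth μ M hM cs k

lemma list_prod_range_map {n : ℕ} (f : ℕ → K) :
    ((List.range n).map f).prod = ∏ j ∈ Finset.range n, f j := by
  induction n with
  | zero => simp
  | succ n ih => rw [List.range_succ, List.map_append, List.prod_append,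
      Finset.prod_range_succ, ih, List.map_singleton, List.prod_singleton]

lemma exists_rank_one_rep (F : Fin (d+1) → Matrix (Fin (d+1)) (Fin (d+1)) K)
    (horth : ∀ i j, F i * F j = if i = j then F i else 0)
    (hne : ∀ i, F i ≠ 0) (j : Fin (d+1)) (v : Fin (d+1) → K)
    (hv : F j *ᵥ v = v) (hv0 : v ≠ 0) :
    ∃ w : Fin (d+1) → K, F j = Matrix.vecMulVec v w := by
  classical
  have hmv : ∀ k : Fin (d+1), ∃ x, F k *ᵥ x ≠ 0 := by
    intro k
    by_contra h
    push_neg at h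
    apply hne k
    ext a b
    have h2 := congrFun (h (Pi.single b 1)) a
    simpa [Matrix.mulVec_single] using h2
  choose xv hxv using hmv
  have hFw0 : ∀ t k : Fin (d+1), F t *ᵥ (F k *ᵥ xv k) = if t = k then F k *ᵥ xv k else 0 := by
    intro t k
    rw [Matrix.mulVec_mulVec]
    by_cases h : t = k
    · rw [horth, if_pos h, h, if_pos rfl]
    · rw [horth, if_neg h, Matrix.zero_mulVec, if_neg h]
  have hli : LinearIndependent K (fun k : {k : Fin (d+1) // k ≠ j} => F k.1 *ᵥ xv k.1) := by
    rw [Fintype.linearIndependent_iff]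
    intro c hc k
    have h3 : Matrix.mulVecLin (F k.1)
        (∑ t : {k : Fin (d+1) // k ≠ j}, c t • (F t.1 *ᵥ xv t.1)) = 0 := by
      rw [hc, map_zero]
    rw [map_sum] at h3
    simp only [LinearMap.map_smul] at h3
    simp only [Matrix.mulVecLin_apply] at h3
    rw [Finset.sum_eq_single k] at h3
    · rw [hFw0, if_pos rfl] at h3
      rcases smul_eq_zero.1 h3 with h4 | h4
      · exact h4
      · exact absurd h4 (hxv k.1)
    · intro t _ htk
      rw [hFw0, if_neg (fun h => htk (Subtype.ext h.symm)), smul_zero]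
    · intro h; exact absurd (Finset.mem_univ _) h
  have hker : Submodule.span K (Set.range (fun k : {k : Fin (d+1) // k ≠ j} => F k.1 *ᵥ xv k.1))
      ≤ LinearMap.ker (Matrix.mulVecLin (F j)) := by
    rw [Submodule.span_le]
    rintro _ ⟨k, rfl⟩
    rw [SetLike.mem_coe, LinearMap.mem_ker, Matrix.mulVecLin_apply, hFw0,
      if_neg (fun h => k.2 h.symm)]
  have hcard : Fintype.card {k : Fin (d+1) // k ≠ j} = d := by
    have h5 := Fintype.card_subtype_compl (fun k : Fin (d+1) => k = j)
    rw [Fintype.card_subtype_eq, Fintype.card_fin] at h5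
    exact h5.trans (by omega)
  have hdspan : Module.finrank K (Submodule.span K
      (Set.range (fun k : {k : Fin (d+1) // k ≠ j} => F k.1 *ᵥ xv k.1))) = d := by
    rw [finrank_span_eq_card hli, hcard]
  have hkerge : d ≤ Module.finrank K (LinearMap.ker (Matrix.mulVecLin (F j))) := by
    have h6 := Submodule.finrank_mono hker
    omega
  have hrn := LinearMap.finrank_range_add_finrank_ker (Matrix.mulVecLin (F j))
  rw [Module.finrank_fintype_fun_eq_card, Fintype.card_fin] at hrn
  have hrange1 : Module.finrank K (LinearMap.range (Matrix.mulVecLin (F j))) ≤ 1 := by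
    omega
  have hvmem : v ∈ LinearMap.range (Matrix.mulVecLin (F j)) :=
    ⟨v, by rw [Matrix.mulVecLin_apply, hv]⟩
  have hsple : (Submodule.span K {v} : Submodule K (Fin (d+1) → K))
      ≤ LinearMap.range (Matrix.mulVecLin (F j)) := by
    rw [Submodule.span_le, Set.singleton_subset_iff]
    exact hvmem
  have hspeq : (Submodule.span K {v} : Submodule K (Fin (d+1) → K))
      = LinearMap.range (Matrix.mulVecLin (F j)) := by
    refine Submodule.eq_of_le_of_finrank_le hsple ?_
    rw [finrank_span_singleton hv0]
    exact hrange1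
  have hco : ∀ x, ∃ a : K, F j *ᵥ x = a • v := by
    intro x
    have hmem : F j *ᵥ x ∈ (Submodule.span K {v} : Submodule K (Fin (d+1) → K)) := by
      rw [hspeq]
      exact ⟨x, by rw [Matrix.mulVecLin_apply]⟩
    obtain ⟨a, ha⟩ := Submodule.mem_span_singleton.1 hmem
    exact ⟨a, ha.symm⟩
  choose w hw using fun b => hco (Pi.single b 1)
  refine ⟨w, ?_⟩
  ext a b
  have h6 := congrFun (hw b) a
  rw [Matrix.mulVec_single] at h6
  simpa [Matrix.vecMulVec_apply, mul_comm] using h6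

lemma final_algebra {K : Type*} [Field K] (e0 ed s0 sd a0 a0' ad ad' b0 b0d tS hS Th α0 αd γ0 : K)
    (he0 : e0 ≠ 0) (hed : ed ≠ 0) (hs0 : s0 ≠ 0) (hsd : sd ≠ 0)
    (ha0 : a0 ≠ 0) (ha0' : a0' ≠ 0) (had : ad ≠ 0) (had' : ad' ≠ 0)
    (hb0 : b0 ≠ 0) (hb0d : b0d ≠ 0) (htS : tS ≠ 0) (hhS : hS ≠ 0) (hTh : Th ≠ 0)
    (h1 : a0 * α0 = b0 * γ0) (h2 : ad * αd = b0d * γ0)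
    (hKEY : ad' * tS * b0d = a0' * hS * b0) :
    (e0 * (s0 * (a0 * α0))) / (e0 * (sd * (a0' * α0)))
      = (Th * (a0 * hS * b0)) / (Th * (ad * tS * b0d))
        * ((ed * (s0 * (ad * αd))) / (ed * (sd * (ad' * αd)))) := by
  rcases eq_or_ne γ0 0 with hγ | hγ
  · have hα0 : α0 = 0 := by
      rw [hγ, mul_zero] at h1
      exact (mul_eq_zero.1 h1).resolve_left ha0
    have hαd : αd = 0 := by
      rw [hγ, mul_zero] at h2
      exact (mul_eq_zero.1 h2).resolve_left had
    rw [hα0, hαd]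
    simp
  · have hα0 : α0 ≠ 0 := by
      intro h
      rw [h, mul_zero] at h1
      exact (mul_ne_zero hb0 hγ) h1.symm
    have hαd : αd ≠ 0 := by
      intro h
      rw [h, mul_zero] at h2
      exact (mul_ne_zero hb0d hγ) h2.symm
    rw [mul_div_mul_left _ _ he0, mul_div_mul_left _ _ hTh, mul_div_mul_left _ _ hed,
      div_mul_div_comm,
      div_eq_div_iff (by exact mul_ne_zero hsd (mul_ne_zero ha0' hα0))
        (mul_ne_zero (mul_ne_zero (mul_ne_zero had htS) hb0d)
          (mul_ne_zero hsd (mul_ne_zero had' hαd)))]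
    linear_combination (s0 * a0 * α0 * sd * ad * αd) * hKEY

end LSAux

/-- `⟨ξ_0,ξ*_0⟩/⟨ξ_0,ξ*_d⟩ = (ϕ/φ) ⟨ξ_d,ξ*_0⟩/⟨ξ_d,ξ*_d⟩`. -/
theorem LeonardSystem.bilin_ratio {K : Type*} [Field K] {d : ℕ}
    (L : LeonardSystem K d)
    (σ : (Matrix (Fin (d+1)) (Fin (d+1)) K) →ₗ[K] Matrix (Fin (d+1)) (Fin (d+1)) K)
    (hanti : ∀ X Y, σ (X * Y) = σ Y * σ X) (hbij : Function.Bijective σ)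
    (hA : σ L.A = L.A) (hAs : σ L.Astar = L.Astar)
    (B : (Fin (d+1) → K) →ₗ[K] (Fin (d+1) → K) →ₗ[K] K) (hB : B ≠ 0)
    (hcomp : ∀ (X : Matrix (Fin (d+1)) (Fin (d+1)) K) (u v : Fin (d+1) → K),
      B (X.mulVec u) v = B u ((σ X).mulVec v))
    (ξ0 ξd ξs0 ξsd : Fin (d+1) → K)
    (hξ0 : ξ0 ≠ 0) (hξd : ξd ≠ 0) (hξs0 : ξs0 ≠ 0) (hξsd : ξsd ≠ 0)
    (hE0 : (L.E 0).mulVec ξ0 = ξ0) (hEd : (L.E (Fin.last d)).mulVec ξd = ξd)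
    (hEs0 : (L.Estar 0).mulVec ξs0 = ξs0) (hEsd : (L.Estar (Fin.last d)).mulVec ξsd = ξsd) :
    B ξ0 ξs0 / B ξ0 ξsd = L.phiProd d / L.varphiProd d * (B ξd ξs0 / B ξd ξsd) := by
  classical
  -- σ fixes 1
  obtain ⟨Y0, hY0⟩ := hbij.2 1
  have hσ1 : σ 1 = 1 := by
    have h := hanti Y0 1
    rw [mul_one, hY0, mul_one] at h
    exact h.symm
  -- pick eigenvectors and rank-one representations
  have hpickE : ∀ j, ∃ v : Fin (d+1) → K, L.E j *ᵥ v = v ∧ v ≠ 0 := by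
    intro j
    have hmv : ∃ x, L.E j *ᵥ x ≠ 0 := by
      by_contra h
      push_neg at h
      apply L.E_ne j
      ext a b
      have h2 := congrFun (h (Pi.single b 1)) a
      simpa [Matrix.mulVec_single] using h2
    obtain ⟨x, hx⟩ := hmv
    refine ⟨L.E j *ᵥ x, ?_, hx⟩
    rw [Matrix.mulVec_mulVec, L.E_mul, if_pos rfl]
  choose χ hχfix hχne using hpickE
  choose f hfrep using fun j =>
    LSAux.exists_rank_one_rep L.E L.E_mul L.E_ne j (χ j) (hχfix j) (hχne j)
  have hpickS : ∀ j, ∃ v : Fin (d+1) → K, L.Estar j *ᵥ v = v ∧ v ≠ 0 := by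
    intro j
    have hmv : ∃ x, L.Estar j *ᵥ x ≠ 0 := by
      by_contra h
      push_neg at h
      apply L.Es_ne j
      ext a b
      have h2 := congrFun (h (Pi.single b 1)) a
      simpa [Matrix.mulVec_single] using h2
    obtain ⟨x, hx⟩ := hmv
    refine ⟨L.Estar j *ᵥ x, ?_, hx⟩
    rw [Matrix.mulVec_mulVec, L.Es_mul, if_pos rfl]
  choose ψ hψfix hψne using hpickS
  choose g hgrep using fun j =>
    LSAux.exists_rank_one_rep L.Estar L.Es_mul L.Es_ne j (ψ j) (hψfix j) (hψne j)
  have hEv : ∀ j x, L.E j *ᵥ x = (f j ⬝ᵥ x) • χ j := fun j x => by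
    rw [hfrep j, LSAux.vecMulVec_mulVec]
  have hSv : ∀ j x, L.Estar j *ᵥ x = (g j ⬝ᵥ x) • ψ j := fun j x => by
    rw [hgrep j, LSAux.vecMulVec_mulVec]
  -- delta relations
  have hδ : ∀ j k, f j ⬝ᵥ χ k = if j = k then 1 else 0 := by
    intro j k
    have h1 : L.E j *ᵥ χ k = if j = k then χ k else 0 := by
      conv_lhs => rw [← hχfix k]
      rw [Matrix.mulVec_mulVec, L.E_mul]
      by_cases h : j = k
      · rw [if_pos h, if_pos h, h, hχfix k]
      · rw [if_neg h, if_neg h, Matrix.zero_mulVec]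
    rw [hEv] at h1
    by_cases h : j = k
    · rw [if_pos h] at h1 ⊢
      subst h
      exact LSAux.smul_cancel_of_ne_zero (hχne j) (by rw [h1, one_smul])
    · rw [if_neg h] at h1 ⊢
      rcases smul_eq_zero.1 h1 with h2 | h2
      · exact h2
      · exact absurd h2 (hχne j)
  have hδs : ∀ j k, g j ⬝ᵥ ψ k = if j = k then 1 else 0 := by
    intro j k
    have h1 : L.Estar j *ᵥ ψ k = if j = k then ψ k else 0 := by
      conv_lhs => rw [← hψfix k]
      rw [Matrix.mulVec_mulVec, L.Es_mul]
      by_cases h : j = k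
      · rw [if_pos h, if_pos h, h, hψfix k]
      · rw [if_neg h, if_neg h, Matrix.zero_mulVec]
    rw [hSv] at h1
    by_cases h : j = k
    · rw [if_pos h] at h1 ⊢
      subst h
      exact LSAux.smul_cancel_of_ne_zero (hψne j) (by rw [h1, one_smul])
    · rw [if_neg h] at h1 ⊢
      rcases smul_eq_zero.1 h1 with h2 | h2
      · exact h2
      · exact absurd h2 (hψne j)
  -- sum of mulVec
  have hsumMV : ∀ (F : Fin (d+1) → Matrix (Fin (d+1)) (Fin (d+1)) K) (v : Fin (d+1) → K),
      (∑ j, F j) *ᵥ v = ∑ j, F j *ᵥ v := by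
    intro F v
    ext i
    simp only [Matrix.mulVec, dotProduct, Matrix.sum_apply, Finset.sum_apply,
      Finset.sum_mul]
    exact Finset.sum_comm
  have hdot : ∀ (u : Fin (d+1) → K) (F : Fin (d+1) → (Fin (d+1) → K)),
      u ⬝ᵥ (∑ t, F t) = ∑ t, u ⬝ᵥ (F t) := by
    intro u F
    simp only [dotProduct, Finset.sum_apply, Finset.mul_sum]
    exact Finset.sum_comm
  -- completeness
  have hcomplE : ∀ v : Fin (d+1) → K, ∑ j, (f j ⬝ᵥ v) • χ j = v := by
    intro v
    have h2 : (∑ j, L.E j) *ᵥ v = v := by rw [L.E_sum, Matrix.one_mulVec]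
    rw [hsumMV] at h2
    conv_rhs => rw [← h2]
    exact Finset.sum_congr rfl fun j _ => (hEv j v).symm
  have hcomplS : ∀ v : Fin (d+1) → K, ∑ j, (g j ⬝ᵥ v) • ψ j = v := by
    intro v
    have h2 : (∑ j, L.Estar j) *ᵥ v = v := by rw [L.Es_sum, Matrix.one_mulVec]
    rw [hsumMV] at h2
    conv_rhs => rw [← h2]
    exact Finset.sum_congr rfl fun j _ => (hSv j v).symm
  -- eigenvector equations
  have heig : ∀ k, L.A *ᵥ χ k = L.θ k • χ k := by
    intro k
    conv_lhs => rw [L.A_eq]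
    rw [hsumMV, Finset.sum_eq_single k]
    · rw [Matrix.smul_mulVec, hχfix]
    · intro i _ hik
      rw [Matrix.smul_mulVec, hEv, hδ, if_neg hik, zero_smul, smul_zero]
    · intro h; exact absurd (Finset.mem_univ _) h
  have heigs : ∀ k, L.Astar *ᵥ ψ k = L.θs k • ψ k := by
    intro k
    conv_lhs => rw [L.As_eq]
    rw [hsumMV, Finset.sum_eq_single k]
    · rw [Matrix.smul_mulVec, hψfix]
    · intro i _ hik
      rw [Matrix.smul_mulVec, hSv, hδs, if_neg hik, zero_smul, smul_zero]
    · intro h; exact absurd (Finset.mem_univ _) h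
  -- decomposition of matP actions
  have hdecompE : ∀ (cs : List K) (v : Fin (d+1) → K), LSAux.matP L.A cs *ᵥ v
      = ∑ t, ((f t ⬝ᵥ v) * ((cs.map (fun c => L.θ t - c)).prod)) • χ t := by
    intro cs v
    conv_lhs => rw [← hcomplE v]
    have h2 : LSAux.matP L.A cs *ᵥ (∑ t, (f t ⬝ᵥ v) • χ t)
        = ∑ t, (f t ⬝ᵥ v) • (LSAux.matP L.A cs *ᵥ χ t) := by
      rw [← Matrix.mulVecLin_apply, map_sum]
      exact Finset.sum_congr rfl fun t _ => by
        rw [LinearMap.map_smul, Matrix.mulVecLin_apply]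
    rw [h2]
    exact Finset.sum_congr rfl fun t _ => by
      rw [LSAux.matP_mulVec_eig L.A (L.θ t) (χ t) (heig t) cs, smul_smul]
  have hdecompS : ∀ (cs : List K) (v : Fin (d+1) → K), LSAux.matP L.Astar cs *ᵥ v
      = ∑ t, ((g t ⬝ᵥ v) * ((cs.map (fun c => L.θs t - c)).prod)) • ψ t := by
    intro cs v
    conv_lhs => rw [← hcomplS v]
    have h2 : LSAux.matP L.Astar cs *ᵥ (∑ t, (g t ⬝ᵥ v) • ψ t)
        = ∑ t, (g t ⬝ᵥ v) • (LSAux.matP L.Astar cs *ᵥ ψ t) := by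
      rw [← Matrix.mulVecLin_apply, map_sum]
      exact Finset.sum_congr rfl fun t _ => by
        rw [LinearMap.map_smul, Matrix.mulVecLin_apply]
    rw [h2]
    exact Finset.sum_congr rfl fun t _ => by
      rw [LSAux.matP_mulVec_eig L.Astar (L.θs t) (ψ t) (heigs t) cs, smul_smul]
  -- coordinates of matP actions (diagonal side)
  have hcoordE : ∀ (cs : List K) (v : Fin (d+1) → K) (k : Fin (d+1)),
      f k ⬝ᵥ (LSAux.matP L.A cs *ᵥ v)
        = (f k ⬝ᵥ v) * ((cs.map (fun c => L.θ k - c)).prod) := by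
    intro cs v k
    rw [hdecompE, hdot, Finset.sum_eq_single k]
    · rw [dotProduct_smul, hδ, if_pos rfl, smul_eq_mul, mul_one]
    · intro t _ htk
      rw [dotProduct_smul, hδ, if_neg (fun h => htk h.symm), smul_eq_mul, mul_zero]
    · intro h; exact absurd (Finset.mem_univ _) h
  -- single survivor evaluation
  have hconcE : ∀ (cs : List K) (v : Fin (d+1) → K) (k0 : Fin (d+1)),
      (∀ t : Fin (d+1), t ≠ k0 → ((cs.map (fun c => L.θ t - c)).prod) = 0) →
      LSAux.matP L.A cs *ᵥ v
        = ((f k0 ⬝ᵥ v) * ((cs.map (fun c => L.θ k0 - c)).prod)) • χ k0 := by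
    intro cs v k0 hz
    rw [hdecompE, Finset.sum_eq_single k0]
    · intro t _ htk
      rw [hz t htk, mul_zero, zero_smul]
    · intro h; exact absurd (Finset.mem_univ _) h
  -- the m-matrices and their tridiagonality
  have hmSrep : ∀ j k, L.E j * L.Astar * L.E k
      = (f j ⬝ᵥ (L.Astar *ᵥ χ k)) • Matrix.vecMulVec (χ j) (f k) := by
    intro j k
    rw [hfrep j, hfrep k, LSAux.vecMulVec_mul_mul_vecMulVec]
  have hmErep : ∀ j k, L.Estar j * L.A * L.Estar k
      = (g j ⬝ᵥ (L.A *ᵥ ψ k)) • Matrix.vecMulVec (ψ j) (g k) := by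
    intro j k
    rw [hgrep j, hgrep k, LSAux.vecMulVec_mul_mul_vecMulVec]
  have hvvE : ∀ j k, Matrix.vecMulVec (χ j) (f k) ≠ 0 := by
    intro j k h
    apply hχne j
    have h2 := congrArg (fun X : Matrix (Fin (d+1)) (Fin (d+1)) K => X *ᵥ χ k) h
    rw [LSAux.vecMulVec_mulVec, hδ, if_pos rfl, one_smul, Matrix.zero_mulVec] at h2
    exact h2
  have hvvS : ∀ j k, Matrix.vecMulVec (ψ j) (g k) ≠ 0 := by
    intro j k h
    apply hψne j
    have h2 := congrArg (fun X : Matrix (Fin (d+1)) (Fin (d+1)) K => X *ᵥ ψ k) h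
    rw [LSAux.vecMulVec_mulVec, hδs, if_pos rfl, one_smul, Matrix.zero_mulVec] at h2
    exact h2
  have hintabs : ∀ j k : Fin (d+1), ((j : ℤ) - (k : ℤ)).natAbs = ((j:ℕ) : ℤ).natAbs + 0 ∨ True :=
    fun _ _ => Or.inr trivial
  have hmS0 : ∀ j k : Fin (d+1), ((k:ℕ)+1 < (j:ℕ) ∨ (j:ℕ)+1 < (k:ℕ)) →
      f j ⬝ᵥ (L.Astar *ᵥ χ k) = 0 := by
    intro j k h
    have h2 := L.trid0 j k (by omega)
    rw [hmSrep] at h2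
    rcases smul_eq_zero.1 h2 with h3 | h3
    · exact h3
    · exact absurd h3 (hvvE j k)
  have hmS1 : ∀ j k : Fin (d+1), ((k:ℕ)+1 = (j:ℕ) ∨ (j:ℕ)+1 = (k:ℕ)) →
      f j ⬝ᵥ (L.Astar *ᵥ χ k) ≠ 0 := by
    intro j k h h0
    apply L.trid1 j k (by omega)
    rw [hmSrep, h0, zero_smul]
  have hmE0 : ∀ j k : Fin (d+1), ((k:ℕ)+1 < (j:ℕ) ∨ (j:ℕ)+1 < (k:ℕ)) →
      g j ⬝ᵥ (L.A *ᵥ ψ k) = 0 := by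
    intro j k h
    have h2 := L.strid0 j k (by omega)
    rw [hmErep] at h2
    rcases smul_eq_zero.1 h2 with h3 | h3
    · exact h3
    · exact absurd h3 (hvvS j k)
  have hmE1 : ∀ j k : Fin (d+1), ((k:ℕ)+1 = (j:ℕ) ∨ (j:ℕ)+1 = (k:ℕ)) →
      g j ⬝ᵥ (L.A *ᵥ ψ k) ≠ 0 := by
    intro j k h h0
    apply L.strid1 j k (by omega)
    rw [hmErep, h0, zero_smul]
  -- transfer of matP action to coordinates (off-diagonal side)
  have htransS : ∀ (cs : List K) (v : Fin (d+1) → K) (j : Fin (d+1)),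
      g j ⬝ᵥ (LSAux.matP L.A cs *ᵥ v)
        = LSAux.appC (fun a b => g a ⬝ᵥ (L.A *ᵥ ψ b)) cs (fun t => g t ⬝ᵥ v) j := by
    intro cs
    induction cs with
    | nil => intro v j; rw [LSAux.matP_nil, Matrix.one_mulVec]; rfl
    | cons c cs ih =>
      intro v j
      rw [LSAux.matP_cons_mulVec, dotProduct_sub, dotProduct_smul]
      have h2 : L.A *ᵥ (LSAux.matP L.A cs *ᵥ v)
          = ∑ t, (g t ⬝ᵥ (LSAux.matP L.A cs *ᵥ v)) • (L.A *ᵥ ψ t) := by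
        conv_lhs => rw [← hcomplS (LSAux.matP L.A cs *ᵥ v)]
        rw [← Matrix.mulVecLin_apply, map_sum]
        exact Finset.sum_congr rfl fun t _ => by
          rw [LinearMap.map_smul, Matrix.mulVecLin_apply]
      rw [h2, hdot]
      have h3 : ∀ t : Fin (d+1), g j ⬝ᵥ ((g t ⬝ᵥ (LSAux.matP L.A cs *ᵥ v)) • (L.A *ᵥ ψ t))
          = (g j ⬝ᵥ (L.A *ᵥ ψ t)) * (g t ⬝ᵥ (LSAux.matP L.A cs *ᵥ v)) := by
        intro t
        rw [dotProduct_smul, smul_eq_mul, mul_comm]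
      have h4 : (fun t => g t ⬝ᵥ (LSAux.matP L.A cs *ᵥ v))
          = LSAux.appC (fun a b => g a ⬝ᵥ (L.A *ᵥ ψ b)) cs (fun t => g t ⬝ᵥ v) :=
        funext fun t => ih v t
      calc (∑ t, g j ⬝ᵥ ((g t ⬝ᵥ (LSAux.matP L.A cs *ᵥ v)) • (L.A *ᵥ ψ t)))
            - c • (g j ⬝ᵥ (LSAux.matP L.A cs *ᵥ v))
          = LSAux.opC (fun a b => g a ⬝ᵥ (L.A *ᵥ ψ b))
              (fun t => g t ⬝ᵥ (LSAux.matP L.A cs *ᵥ v)) j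
            - c * (fun t => g t ⬝ᵥ (LSAux.matP L.A cs *ᵥ v)) j := by
            rw [LSAux.opC]
            rw [Finset.sum_congr rfl fun t _ => h3 t]
            rfl
        _ = _ := by rw [h4]; rfl
  have htransE : ∀ (cs : List K) (v : Fin (d+1) → K) (j : Fin (d+1)),
      f j ⬝ᵥ (LSAux.matP L.Astar cs *ᵥ v)
        = LSAux.appC (fun a b => f a ⬝ᵥ (L.Astar *ᵥ χ b)) cs (fun t => f t ⬝ᵥ v) j := by
    intro cs
    induction cs with
    | nil => intro v j; rw [LSAux.matP_nil, Matrix.one_mulVec]; rfl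
    | cons c cs ih =>
      intro v j
      rw [LSAux.matP_cons_mulVec, dotProduct_sub, dotProduct_smul]
      have h2 : L.Astar *ᵥ (LSAux.matP L.Astar cs *ᵥ v)
          = ∑ t, (f t ⬝ᵥ (LSAux.matP L.Astar cs *ᵥ v)) • (L.Astar *ᵥ χ t) := by
        conv_lhs => rw [← hcomplE (LSAux.matP L.Astar cs *ᵥ v)]
        rw [← Matrix.mulVecLin_apply, map_sum]
        exact Finset.sum_congr rfl fun t _ => by
          rw [LinearMap.map_smul, Matrix.mulVecLin_apply]
      rw [h2, hdot]
      have h3 : ∀ t : Fin (d+1), f j ⬝ᵥ ((f t ⬝ᵥ (LSAux.matP L.Astar cs *ᵥ v)) • (L.Astar *ᵥ χ t))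
          = (f j ⬝ᵥ (L.Astar *ᵥ χ t)) * (f t ⬝ᵥ (LSAux.matP L.Astar cs *ᵥ v)) := by
        intro t
        rw [dotProduct_smul, smul_eq_mul, mul_comm]
      have h4 : (fun t => f t ⬝ᵥ (LSAux.matP L.Astar cs *ᵥ v))
          = LSAux.appC (fun a b => f a ⬝ᵥ (L.Astar *ᵥ χ b)) cs (fun t => f t ⬝ᵥ v) :=
        funext fun t => ih v t
      calc (∑ t, f j ⬝ᵥ ((f t ⬝ᵥ (LSAux.matP L.Astar cs *ᵥ v)) • (L.Astar *ᵥ χ t)))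
            - c • (f j ⬝ᵥ (LSAux.matP L.Astar cs *ᵥ v))
          = LSAux.opC (fun a b => f a ⬝ᵥ (L.Astar *ᵥ χ b))
              (fun t => f t ⬝ᵥ (LSAux.matP L.Astar cs *ᵥ v)) j
            - c * (fun t => f t ⬝ᵥ (LSAux.matP L.Astar cs *ᵥ v)) j := by
            rw [LSAux.opC]
            rw [Finset.sum_congr rfl fun t _ => h3 t]
            rfl
        _ = _ := by rw [h4]; rfl
  have hconcS : ∀ (cs : List K) (v : Fin (d+1) → K) (k0 : Fin (d+1)),
      (∀ t : Fin (d+1), t ≠ k0 → ((cs.map (fun c => L.θs t - c)).prod) = 0) →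
      LSAux.matP L.Astar cs *ᵥ v
        = ((g k0 ⬝ᵥ v) * ((cs.map (fun c => L.θs k0 - c)).prod)) • ψ k0 := by
    intro cs v k0 hz
    rw [hdecompS, Finset.sum_eq_single k0]
    · intro t _ htk
      rw [hz t htk, mul_zero, zero_smul]
    · intro h; exact absurd (Finset.mem_univ _) h
  -- θN basic facts
  have hθN : ∀ (t : Fin (d+1)), L.θN (t : ℕ) = L.θ t := by
    intro t
    rw [LeonardSystem.θN, dif_pos t.isLt]
  have hθsN : ∀ (t : Fin (d+1)), L.θsN (t : ℕ) = L.θs t := by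
    intro t
    rw [LeonardSystem.θsN, dif_pos t.isLt]
  -- erased lists kill all but one eigenvalue
  have herase_len : ∀ k : Fin (d+1),
      (((List.range (d+1)).erase (k : ℕ)).map L.θN).length = d := by
    intro k
    have hmem : (k : ℕ) ∈ List.range (d+1) := List.mem_range.2 k.isLt
    have h2 := List.length_erase_add_one hmem
    rw [List.length_range] at h2
    rw [List.length_map]
    omega
  have herase_zero : ∀ (k t : Fin (d+1)), t ≠ k →
      (((((List.range (d+1)).erase (k : ℕ)).map L.θN).map (fun c => L.θ t - c)).prod) = 0 := by
    intro k t ht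
    apply List.prod_eq_zero
    rw [List.map_map]
    refine List.mem_map.2 ⟨(t : ℕ), ?_, ?_⟩
    · exact (List.mem_erase_of_ne (fun h => ht (Fin.ext h))).2 (List.mem_range.2 t.isLt)
    · show L.θ t - L.θN (t : ℕ) = 0
      rw [hθN, sub_self]
  have herase_lens : ∀ k : Fin (d+1),
      (((List.range (d+1)).erase (k : ℕ)).map L.θsN).length = d := by
    intro k
    have hmem : (k : ℕ) ∈ List.range (d+1) := List.mem_range.2 k.isLt
    have h2 := List.length_erase_add_one hmem
    rw [List.length_range] at h2
    rw [List.length_map]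
    omega
  have herase_zeros : ∀ (k t : Fin (d+1)), t ≠ k →
      (((((List.range (d+1)).erase (k : ℕ)).map L.θsN).map (fun c => L.θs t - c)).prod) = 0 := by
    intro k t ht
    apply List.prod_eq_zero
    rw [List.map_map]
    refine List.mem_map.2 ⟨(t : ℕ), ?_, ?_⟩
    · exact (List.mem_erase_of_ne (fun h => ht (Fin.ext h))).2 (List.mem_range.2 t.isLt)
    · show L.θs t - L.θsN (t : ℕ) = 0
      rw [hθsN, sub_self]
  -- components of ψ 0 in the χ basis are all nonzero
  have hfψ0 : ∀ k : Fin (d+1), f k ⬝ᵥ ψ 0 ≠ 0 := by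
    intro k hk0
    have hu0 : LSAux.matP L.A (((List.range (d+1)).erase (k : ℕ)).map L.θN) *ᵥ ψ 0 = 0 := by
      rw [hconcE _ (ψ 0) k (herase_zero k), hk0, zero_mul, zero_smul]
    have hxs : ∀ j : Fin (d+1), (0:ℕ) < (j:ℕ) → (fun t => g t ⬝ᵥ ψ 0) j = 0 := by
      intro j hj
      show g j ⬝ᵥ ψ 0 = 0
      rw [hδs, if_neg (fun h => by rw [h] at hj; simp at hj)]
    obtain ⟨_, Hv⟩ := LSAux.high (fun a b => g a ⬝ᵥ (L.A *ᵥ ψ b))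
      (fun a b h => hmE0 a b (Or.inl h)) (((List.range (d+1)).erase (k : ℕ)).map L.θN) 0
      (by rw [herase_len k]; omega) (fun t => g t ⬝ᵥ ψ 0) hxs
    have hval := Hv ⟨d, by omega⟩ (by simp [herase_len k]) 0 rfl
    have hchain := LSAux.chain_high_ne_zero (fun a b => g a ⬝ᵥ (L.A *ᵥ ψ b))
      (fun a b h => hmE1 a b (Or.inl h.symm)) 0
      ((((List.range (d+1)).erase (k : ℕ)).map L.θN).length) (by rw [herase_len k]; omega)
    have hrhs : (∏ t ∈ Finset.range ((((List.range (d+1)).erase (k : ℕ)).map L.θN).length),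
        LSAux.mN (fun a b => g a ⬝ᵥ (L.A *ᵥ ψ b)) (0+t+1) (0+t))
          * ((fun t => g t ⬝ᵥ ψ 0) (0 : Fin (d+1))) ≠ 0 := by
      have hx0 : (fun t => g t ⬝ᵥ ψ 0) (0 : Fin (d+1)) = 1 := by
        show g 0 ⬝ᵥ ψ 0 = 1
        rw [hδs, if_pos rfl]
      rw [hx0, mul_one]
      exact hchain
    apply hrhs
    rw [← hval, ← htransS _ (ψ 0) ⟨d, by omega⟩, hu0, dotProduct_zero]
  -- components of ψ last
  have hfψd : ∀ k : Fin (d+1), f k ⬝ᵥ ψ (Fin.last d) ≠ 0 := by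
    intro k hk0
    have hu0 : LSAux.matP L.A (((List.range (d+1)).erase (k : ℕ)).map L.θN)
        *ᵥ ψ (Fin.last d) = 0 := by
      rw [hconcE _ (ψ (Fin.last d)) k (herase_zero k), hk0, zero_mul, zero_smul]
    have hxs : ∀ j : Fin (d+1), (j:ℕ) < d → (fun t => g t ⬝ᵥ ψ (Fin.last d)) j = 0 := by
      intro j hj
      show g j ⬝ᵥ ψ (Fin.last d) = 0
      rw [hδs, if_neg (fun h => by rw [h] at hj; simp at hj)]
    obtain ⟨_, Hv⟩ := LSAux.low (fun a b => g a ⬝ᵥ (L.A *ᵥ ψ b))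
      (fun a b h => hmE0 a b (Or.inr h)) (((List.range (d+1)).erase (k : ℕ)).map L.θN) d
      (by rw [herase_len k]) (by omega) (fun t => g t ⬝ᵥ ψ (Fin.last d)) hxs
    have hval := Hv 0 (by simp [herase_len k]) (Fin.last d) rfl
    have hchain := LSAux.chain_low_ne_zero (fun a b => g a ⬝ᵥ (L.A *ᵥ ψ b))
      (fun a b h => hmE1 a b (Or.inr h)) d
      ((((List.range (d+1)).erase (k : ℕ)).map L.θN).length) (by rw [herase_len k]) (by omega)
    have hrhs : (∏ t ∈ Finset.range ((((List.range (d+1)).erase (k : ℕ)).map L.θN).length),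
        LSAux.mN (fun a b => g a ⬝ᵥ (L.A *ᵥ ψ b)) (d-t-1) (d-t))
          * ((fun t => g t ⬝ᵥ ψ (Fin.last d)) (Fin.last d)) ≠ 0 := by
      have hx0 : (fun t => g t ⬝ᵥ ψ (Fin.last d)) (Fin.last d) = 1 := by
        show g (Fin.last d) ⬝ᵥ ψ (Fin.last d) = 1
        rw [hδs, if_pos rfl]
      rw [hx0, mul_one]
      exact hchain
    apply hrhs
    rw [← hval, ← htransS _ (ψ (Fin.last d)) 0, hu0, dotProduct_zero]
  -- components of χ 0 in the ψ basis
  have hgχ0 : ∀ k : Fin (d+1), g k ⬝ᵥ χ 0 ≠ 0 := by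
    intro k hk0
    have hu0 : LSAux.matP L.Astar (((List.range (d+1)).erase (k : ℕ)).map L.θsN) *ᵥ χ 0 = 0 := by
      rw [hconcS _ (χ 0) k (herase_zeros k), hk0, zero_mul, zero_smul]
    have hxs : ∀ j : Fin (d+1), (0:ℕ) < (j:ℕ) → (fun t => f t ⬝ᵥ χ 0) j = 0 := by
      intro j hj
      show f j ⬝ᵥ χ 0 = 0
      rw [hδ, if_neg (fun h => by rw [h] at hj; simp at hj)]
    obtain ⟨_, Hv⟩ := LSAux.high (fun a b => f a ⬝ᵥ (L.Astar *ᵥ χ b))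
      (fun a b h => hmS0 a b (Or.inl h)) (((List.range (d+1)).erase (k : ℕ)).map L.θsN) 0
      (by rw [herase_lens k]; omega) (fun t => f t ⬝ᵥ χ 0) hxs
    have hval := Hv ⟨d, by omega⟩ (by simp [herase_lens k]) 0 rfl
    have hchain := LSAux.chain_high_ne_zero (fun a b => f a ⬝ᵥ (L.Astar *ᵥ χ b))
      (fun a b h => hmS1 a b (Or.inl h.symm)) 0
      ((((List.range (d+1)).erase (k : ℕ)).map L.θsN).length) (by rw [herase_lens k]; omega)
    have hrhs : (∏ t ∈ Finset.range ((((List.range (d+1)).erase (k : ℕ)).map L.θsN).length),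
        LSAux.mN (fun a b => f a ⬝ᵥ (L.Astar *ᵥ χ b)) (0+t+1) (0+t))
          * ((fun t => f t ⬝ᵥ χ 0) (0 : Fin (d+1))) ≠ 0 := by
      have hx0 : (fun t => f t ⬝ᵥ χ 0) (0 : Fin (d+1)) = 1 := by
        show f 0 ⬝ᵥ χ 0 = 1
        rw [hδ, if_pos rfl]
      rw [hx0, mul_one]
      exact hchain
    apply hrhs
    rw [← hval, ← htransE _ (χ 0) ⟨d, by omega⟩, hu0, dotProduct_zero]
  have hgχd : ∀ k : Fin (d+1), g k ⬝ᵥ χ (Fin.last d) ≠ 0 := by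
    intro k hk0
    have hu0 : LSAux.matP L.Astar (((List.range (d+1)).erase (k : ℕ)).map L.θsN)
        *ᵥ χ (Fin.last d) = 0 := by
      rw [hconcS _ (χ (Fin.last d)) k (herase_zeros k), hk0, zero_mul, zero_smul]
    have hxs : ∀ j : Fin (d+1), (j:ℕ) < d → (fun t => f t ⬝ᵥ χ (Fin.last d)) j = 0 := by
      intro j hj
      show f j ⬝ᵥ χ (Fin.last d) = 0
      rw [hδ, if_neg (fun h => by rw [h] at hj; simp at hj)]
    obtain ⟨_, Hv⟩ := LSAux.low (fun a b => f a ⬝ᵥ (L.Astar *ᵥ χ b))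
      (fun a b h => hmS0 a b (Or.inr h)) (((List.range (d+1)).erase (k : ℕ)).map L.θsN) d
      (by rw [herase_lens k]) (by omega) (fun t => f t ⬝ᵥ χ (Fin.last d)) hxs
    have hval := Hv 0 (by simp [herase_lens k]) (Fin.last d) rfl
    have hchain := LSAux.chain_low_ne_zero (fun a b => f a ⬝ᵥ (L.Astar *ᵥ χ b))
      (fun a b h => hmS1 a b (Or.inr h)) d
      ((((List.range (d+1)).erase (k : ℕ)).map L.θsN).length) (by rw [herase_lens k]) (by omega)
    have hrhs : (∏ t ∈ Finset.range ((((List.range (d+1)).erase (k : ℕ)).map L.θsN).length),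
        LSAux.mN (fun a b => f a ⬝ᵥ (L.Astar *ᵥ χ b)) (d-t-1) (d-t))
          * ((fun t => f t ⬝ᵥ χ (Fin.last d)) (Fin.last d)) ≠ 0 := by
      have hx0 : (fun t => f t ⬝ᵥ χ (Fin.last d)) (Fin.last d) = 1 := by
        show f (Fin.last d) ⬝ᵥ χ (Fin.last d) = 1
        rw [hδ, if_pos rfl]
      rw [hx0, mul_one]
      exact hchain
    apply hrhs
    rw [← hval, ← htransE _ (χ (Fin.last d)) 0, hu0, dotProduct_zero]
  -- link tauA/etaA with matP
  have htauP : ∀ i : ℕ, L.tauA i = LSAux.matP L.A ((List.range i).map L.θN) := by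
    intro i
    induction i with
    | zero => rfl
    | succ i ih =>
      show L.tauA i * (L.A - L.θN i • 1) = _
      rw [ih, List.range_succ]
      simp only [List.map_append, List.map_cons, List.map_nil]
      rw [LSAux.matP_append_singleton]
  have hetaP : ∀ i : ℕ, L.etaA i = LSAux.matP L.A ((List.range i).map (fun j => L.θN (d - j))) := by
    intro i
    induction i with
    | zero => rfl
    | succ i ih =>
      show L.etaA i * (L.A - L.θN (d - i) • 1) = _
      rw [ih, List.range_succ]
      simp only [List.map_append, List.map_cons, List.map_nil]
      rw [LSAux.matP_append_singleton]
  -- trace formulas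
  have hT : ∀ r : ℕ, (L.tauA r * L.Estar 0).trace
      = g 0 ⬝ᵥ (LSAux.matP L.A ((List.range r).map L.θN) *ᵥ ψ 0) := by
    intro r
    rw [hgrep 0, LSAux.trace_mul_vecMulVec, htauP]
  have hH : ∀ r : ℕ, (L.etaA r * L.Estar 0).trace
      = g 0 ⬝ᵥ (LSAux.matP L.A ((List.range r).map (fun j => L.θN (d - j))) *ᵥ ψ 0) := by
    intro r
    rw [hgrep 0, LSAux.trace_mul_vecMulVec, hetaP]
  -- tau/eta scalar products: vanishing and nonvanishing
  have htau_zero : ∀ (r : ℕ) (t : Fin (d+1)), (t : ℕ) < r →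
      ((((List.range r).map L.θN).map (fun c => L.θ t - c)).prod) = 0 := by
    intro r t ht
    apply List.prod_eq_zero
    rw [List.map_map]
    refine List.mem_map.2 ⟨(t : ℕ), List.mem_range.2 ht, ?_⟩
    show L.θ t - L.θN (t : ℕ) = 0
    rw [hθN, sub_self]
  have htau_ne : ∀ (r : ℕ) (hr : r < d+1),
      ((((List.range r).map L.θN).map (fun c => L.θ ⟨r, hr⟩ - c)).prod) ≠ 0 := by
    intro r hr
    apply List.prod_ne_zero
    intro hmem
    rw [List.map_map] at hmem
    obtain ⟨j, hjr, hj2⟩ := List.mem_map.1 hmem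
    have hjr' : j < r := List.mem_range.1 hjr
    have hj3 : L.θ ⟨r, hr⟩ - L.θN j = 0 := hj2
    rw [LeonardSystem.θN, dif_pos (by omega : j < d+1)] at hj3
    have hj4 := L.θ_inj (sub_eq_zero.1 hj3)
    have hj5 : r = j := Fin.mk.inj_iff.1 hj4
    omega
  have heta_zero : ∀ (r : ℕ), r ≤ d → ∀ (t : Fin (d+1)), d - r < (t : ℕ) →
      ((((List.range r).map (fun j => L.θN (d - j))).map (fun c => L.θ t - c)).prod) = 0 := by
    intro r hr t ht
    apply List.prod_eq_zero
    rw [List.map_map]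
    refine List.mem_map.2 ⟨d - (t : ℕ), List.mem_range.2 (by have := t.isLt; omega), ?_⟩
    show L.θ t - L.θN (d - (d - (t : ℕ))) = 0
    have he : d - (d - (t : ℕ)) = (t : ℕ) := by have := t.isLt; omega
    rw [he, hθN, sub_self]
  have heta_ne : ∀ (r : ℕ) (hr : r ≤ d),
      ((((List.range r).map (fun j => L.θN (d - j))).map
        (fun c => L.θ ⟨d - r, by omega⟩ - c)).prod) ≠ 0 := by
    intro r hr
    apply List.prod_ne_zero
    intro hmem
    rw [List.map_map] at hmem
    obtain ⟨j, hjr, hj2⟩ := List.mem_map.1 hmem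
    have hjr' : j < r := List.mem_range.1 hjr
    have hj3 : L.θ ⟨d - r, by omega⟩ - L.θN (d - j) = 0 := hj2
    rw [LeonardSystem.θN, dif_pos (by omega : d - j < d+1)] at hj3
    have hj4 := L.θ_inj (sub_eq_zero.1 hj3)
    have hj5 : d - r = d - j := Fin.mk.inj_iff.1 hj4
    omega
  -- star eigenvalue killing list
  have hstar_kill : ∀ (r : ℕ), r ≤ d → ∀ u : Fin (d+1) → K,
      g 0 ⬝ᵥ u = 0 → (∀ j : Fin (d+1), r < (j : ℕ) → g j ⬝ᵥ u = 0) →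
      LSAux.matP L.Astar ((List.range r).map (fun t => L.θsN (t+1))) *ᵥ u = 0 := by
    intro r hr u h0 hgt
    rw [hdecompS]
    apply Finset.sum_eq_zero
    intro j _
    rcases Nat.lt_or_ge (j : ℕ) 1 with hj | hj
    · have hj0 : j = 0 := by
        apply Fin.ext
        simp only [Fin.val_zero]
        omega
      rw [hj0, h0, zero_mul, zero_smul]
    rcases le_or_gt (j : ℕ) r with hjr | hjr
    · have hprod : (((List.range r).map (fun t => L.θsN (t+1))).map
          (fun c => L.θs j - c)).prod = 0 := by
        apply List.prod_eq_zero
        rw [List.map_map]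
        refine List.mem_map.2 ⟨(j : ℕ) - 1, List.mem_range.2 (by omega), ?_⟩
        show L.θs j - L.θsN ((j : ℕ) - 1 + 1) = 0
        have he : (j : ℕ) - 1 + 1 = (j : ℕ) := by omega
        rw [he, hθsN, sub_self]
      rw [hprod, mul_zero, zero_smul]
    · rw [hgt j hjr, zero_mul, zero_smul]
  -- nonvanishing of the tau traces
  have hTne : ∀ r : ℕ, r ≤ d →
      g 0 ⬝ᵥ (LSAux.matP L.A ((List.range r).map L.θN) *ᵥ ψ 0) ≠ 0 := by
    intro r hr hzero
    have hlenr : ((List.range r).map L.θN).length = r := by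
      rw [List.length_map, List.length_range]
    have hlens : ((List.range r).map (fun t => L.θsN (t+1))).length = r := by
      rw [List.length_map, List.length_range]
    -- star-side support of u
    have hxs : ∀ j : Fin (d+1), (0:ℕ) < (j:ℕ) → (fun t => g t ⬝ᵥ ψ 0) j = 0 := by
      intro j hj
      show g j ⬝ᵥ ψ 0 = 0
      rw [hδs, if_neg (fun h => by rw [h] at hj; simp at hj)]
    obtain ⟨Hs, _⟩ := LSAux.high (fun a b => g a ⬝ᵥ (L.A *ᵥ ψ b))
      (fun a b h => hmE0 a b (Or.inl h)) ((List.range r).map L.θN) 0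
      (by omega) (fun t => g t ⬝ᵥ ψ 0) hxs
    have hsupS : ∀ j : Fin (d+1), r < (j : ℕ) →
        g j ⬝ᵥ (LSAux.matP L.A ((List.range r).map L.θN) *ᵥ ψ 0) = 0 := by
      intro j hj
      rw [htransS]
      exact Hs j (by omega)
    -- E-side coordinates of u
    have hsupE : ∀ j : Fin (d+1), (j : ℕ) < r →
        f j ⬝ᵥ (LSAux.matP L.A ((List.range r).map L.θN) *ᵥ ψ 0) = 0 := by
      intro j hj
      rw [hcoordE, htau_zero r j hj, mul_zero]
    have hur : f ⟨r, by omega⟩ ⬝ᵥ (LSAux.matP L.A ((List.range r).map L.θN) *ᵥ ψ 0) ≠ 0 := by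
      rw [hcoordE]
      exact mul_ne_zero (hfψ0 ⟨r, by omega⟩) (htau_ne r (by omega))
    -- the killed vector
    have hw : LSAux.matP L.Astar ((List.range r).map (fun t => L.θsN (t+1)))
        *ᵥ (LSAux.matP L.A ((List.range r).map L.θN) *ᵥ ψ 0) = 0 :=
      hstar_kill r hr _ hzero hsupS
    obtain ⟨_, Hv⟩ := LSAux.low (fun a b => f a ⬝ᵥ (L.Astar *ᵥ χ b))
      (fun a b h => hmS0 a b (Or.inr h)) ((List.range r).map (fun t => L.θsN (t+1))) r
      (by omega) (by omega)
      (fun t => f t ⬝ᵥ (LSAux.matP L.A ((List.range r).map L.θN) *ᵥ ψ 0)) hsupE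
    have hval := Hv 0 (by simp [hlens]) ⟨r, by omega⟩ rfl
    have hlhs : LSAux.appC (fun a b => f a ⬝ᵥ (L.Astar *ᵥ χ b))
        ((List.range r).map (fun t => L.θsN (t+1)))
        (fun t => f t ⬝ᵥ (LSAux.matP L.A ((List.range r).map L.θN) *ᵥ ψ 0)) 0 = 0 := by
      rw [← htransE, hw, dotProduct_zero]
    rw [hlhs] at hval
    have hchain := LSAux.chain_low_ne_zero (fun a b => f a ⬝ᵥ (L.Astar *ᵥ χ b))
      (fun a b h => hmS1 a b (Or.inr h)) r
      (((List.range r).map (fun t => L.θsN (t+1))).length) (by omega) (by omega)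
    exact (mul_ne_zero hchain hur) hval.symm
  -- nonvanishing of the eta traces
  have hHne : ∀ r : ℕ, r ≤ d →
      g 0 ⬝ᵥ (LSAux.matP L.A ((List.range r).map (fun j => L.θN (d - j))) *ᵥ ψ 0) ≠ 0 := by
    intro r hr hzero
    have hlenr : ((List.range r).map (fun j => L.θN (d - j))).length = r := by
      rw [List.length_map, List.length_range]
    have hlens : ((List.range r).map (fun t => L.θsN (t+1))).length = r := by
      rw [List.length_map, List.length_range]
    have hxs : ∀ j : Fin (d+1), (0:ℕ) < (j:ℕ) → (fun t => g t ⬝ᵥ ψ 0) j = 0 := by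
      intro j hj
      show g j ⬝ᵥ ψ 0 = 0
      rw [hδs, if_neg (fun h => by rw [h] at hj; simp at hj)]
    obtain ⟨Hs, _⟩ := LSAux.high (fun a b => g a ⬝ᵥ (L.A *ᵥ ψ b))
      (fun a b h => hmE0 a b (Or.inl h)) ((List.range r).map (fun j => L.θN (d - j))) 0
      (by omega) (fun t => g t ⬝ᵥ ψ 0) hxs
    have hsupS : ∀ j : Fin (d+1), r < (j : ℕ) →
        g j ⬝ᵥ (LSAux.matP L.A ((List.range r).map (fun j => L.θN (d - j))) *ᵥ ψ 0) = 0 := by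
      intro j hj
      rw [htransS]
      exact Hs j (by omega)
    have hsupE : ∀ j : Fin (d+1), d - r < (j : ℕ) →
        f j ⬝ᵥ (LSAux.matP L.A ((List.range r).map (fun j => L.θN (d - j))) *ᵥ ψ 0) = 0 := by
      intro j hj
      rw [hcoordE, heta_zero r hr j hj, mul_zero]
    have hur : f ⟨d - r, by omega⟩ ⬝ᵥ
        (LSAux.matP L.A ((List.range r).map (fun j => L.θN (d - j))) *ᵥ ψ 0) ≠ 0 := by
      rw [hcoordE]
      exact mul_ne_zero (hfψ0 ⟨d - r, by omega⟩) (heta_ne r hr)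
    have hw : LSAux.matP L.Astar ((List.range r).map (fun t => L.θsN (t+1)))
        *ᵥ (LSAux.matP L.A ((List.range r).map (fun j => L.θN (d - j))) *ᵥ ψ 0) = 0 :=
      hstar_kill r hr _ hzero hsupS
    obtain ⟨_, Hv⟩ := LSAux.high (fun a b => f a ⬝ᵥ (L.Astar *ᵥ χ b))
      (fun a b h => hmS0 a b (Or.inl h)) ((List.range r).map (fun t => L.θsN (t+1))) (d - r)
      (by omega)
      (fun t => f t ⬝ᵥ (LSAux.matP L.A ((List.range r).map (fun j => L.θN (d - j))) *ᵥ ψ 0))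
      hsupE
    have hval := Hv ⟨d, by omega⟩ (by simp [hlens]; omega) ⟨d - r, by omega⟩ rfl
    have hlhs : LSAux.appC (fun a b => f a ⬝ᵥ (L.Astar *ᵥ χ b))
        ((List.range r).map (fun t => L.θsN (t+1)))
        (fun t => f t ⬝ᵥ (LSAux.matP L.A ((List.range r).map (fun j => L.θN (d - j))) *ᵥ ψ 0))
        ⟨d, by omega⟩ = 0 := by
      rw [← htransE, hw, dotProduct_zero]
    rw [hlhs] at hval
    have hchain := LSAux.chain_high_ne_zero (fun a b => f a ⬝ᵥ (L.Astar *ᵥ χ b))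
      (fun a b h => hmS1 a b (Or.inl h.symm)) (d - r)
      (((List.range r).map (fun t => L.θsN (t+1))).length) (by omega)
    exact (mul_ne_zero hchain hur) hval.symm
  -- star-side eta facts (for sigma fixing of Estar 0)
  have hetas_zero : ∀ (t : Fin (d+1)), (0:ℕ) < (t:ℕ) →
      ((((List.range d).map (fun j => L.θsN (d - j))).map (fun c => L.θs t - c)).prod) = 0 := by
    intro t ht
    apply List.prod_eq_zero
    rw [List.map_map]
    refine List.mem_map.2 ⟨d - (t : ℕ), List.mem_range.2 (by have := t.isLt; omega), ?_⟩
    show L.θs t - L.θsN (d - (d - (t : ℕ))) = 0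
    have he : d - (d - (t : ℕ)) = (t : ℕ) := by have := t.isLt; omega
    rw [he, hθsN, sub_self]
  have hetas_ne :
      ((((List.range d).map (fun j => L.θsN (d - j))).map (fun c => L.θs 0 - c)).prod) ≠ 0 := by
    apply List.prod_ne_zero
    intro hmem
    rw [List.map_map] at hmem
    obtain ⟨j, hjr, hj2⟩ := List.mem_map.1 hmem
    have hjr' : j < d := List.mem_range.1 hjr
    have hj3 : L.θs 0 - L.θsN (d - j) = 0 := hj2
    rw [LeonardSystem.θsN, dif_pos (by omega : d - j < d+1)] at hj3
    have hj4 := L.θs_inj (sub_eq_zero.1 hj3)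
    have hj5 : (0 : ℕ) = d - j := by
      have := congrArg Fin.val hj4
      simpa using this
    omega
  -- telescoping the products
  have hT0 : (L.tauA 0 * L.Estar 0).trace = 1 := by
    rw [hT 0]
    rw [show ((List.range 0).map L.θN) = ([] : List K) from rfl, LSAux.matP_nil,
      Matrix.one_mulVec, hδs, if_pos rfl]
  have hH0 : (L.etaA 0 * L.Estar 0).trace = 1 := by
    rw [hH 0]
    rw [show ((List.range 0).map (fun j => L.θN (d - j))) = ([] : List K) from rfl,
      LSAux.matP_nil, Matrix.one_mulVec, hδs, if_pos rfl]
  have htele : ∀ r : ℕ, r ≤ d → L.varphiProd r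
      = (∏ j ∈ Finset.range r, (L.θsN 0 - L.θsN (j+1))) * (L.tauA r * L.Estar 0).trace := by
    intro r
    induction r with
    | zero =>
      intro _
      rw [LeonardSystem.varphiProd, hT0]
      simp
    | succ r ih =>
      intro hr
      have hr' : r ≤ d := by omega
      have hTr_ne : (L.tauA r * L.Estar 0).trace ≠ 0 := by
        rw [hT]
        exact hTne r hr'
      have h1 : L.varphiProd (r+1) = L.varphiProd r * L.varphi (r+1) := by
        rw [LeonardSystem.varphiProd, LeonardSystem.varphiProd, Finset.prod_range_succ]
      rw [h1, ih hr', LeonardSystem.varphi]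
      rw [show r + 1 - 1 = r from rfl, Finset.prod_range_succ]
      field_simp
  have hteleH : ∀ r : ℕ, r ≤ d → L.phiProd r
      = (∏ j ∈ Finset.range r, (L.θsN 0 - L.θsN (j+1))) * (L.etaA r * L.Estar 0).trace := by
    intro r
    induction r with
    | zero =>
      intro _
      rw [LeonardSystem.phiProd, hH0]
      simp
    | succ r ih =>
      intro hr
      have hr' : r ≤ d := by omega
      have hHr_ne : (L.etaA r * L.Estar 0).trace ≠ 0 := by
        rw [hH]
        exact hHne r hr'
      have h1 : L.phiProd (r+1) = L.phiProd r * L.phi (r+1) := by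
        rw [LeonardSystem.phiProd, LeonardSystem.phiProd, Finset.prod_range_succ]
      rw [h1, ih hr', LeonardSystem.phi]
      rw [show r + 1 - 1 = r from rfl, Finset.prod_range_succ]
      field_simp
  -- survivors for the full-length lists
  have hzτ : ∀ t : Fin (d+1), t ≠ Fin.last d →
      ((((List.range d).map L.θN).map (fun c => L.θ t - c)).prod) = 0 := by
    intro t ht
    refine htau_zero d t ?_
    have h1 : (t : ℕ) ≠ d := fun h => ht (Fin.ext (by rw [h, Fin.val_last]))
    have := t.isLt
    omega
  have hzη : ∀ t : Fin (d+1), t ≠ 0 →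
      ((((List.range d).map (fun j => L.θN (d - j))).map (fun c => L.θ t - c)).prod) = 0 := by
    intro t ht
    refine heta_zero d le_rfl t ?_
    have h1 : (t : ℕ) ≠ 0 := fun h => ht (Fin.ext (by rw [h, Fin.val_zero]))
    omega
  have hzηs : ∀ t : Fin (d+1), t ≠ 0 →
      ((((List.range d).map (fun j => L.θsN (d - j))).map (fun c => L.θs t - c)).prod) = 0 := by
    intro t ht
    refine hetas_zero t ?_
    have h1 : (t : ℕ) ≠ 0 := fun h => ht (Fin.ext (by rw [h, Fin.val_zero]))
    omega
  have hτSne : ((((List.range d).map L.θN).map (fun c => L.θ (Fin.last d) - c)).prod) ≠ 0 :=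
    htau_ne d (by omega)
  have hηSne :
      ((((List.range d).map (fun j => L.θN (d - j))).map (fun c => L.θ 0 - c)).prod) ≠ 0 := by
    have h5 := heta_ne d le_rfl
    have hcast : (⟨d - d, by omega⟩ : Fin (d+1)) = (0 : Fin (d+1)) := by
      apply Fin.ext
      simp
    rw [hcast] at h5
    exact h5
  -- values of the extreme traces
  have hφPval : L.varphiProd d = (∏ j ∈ Finset.range d, (L.θsN 0 - L.θsN (j+1)))
      * ((f (Fin.last d) ⬝ᵥ ψ 0)
          * ((((List.range d).map L.θN).map (fun c => L.θ (Fin.last d) - c)).prod)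
          * (g 0 ⬝ᵥ χ (Fin.last d))) := by
    rw [htele d le_rfl, hT d, hconcE _ (ψ 0) (Fin.last d) hzτ, dotProduct_smul,
      smul_eq_mul]
  have hϕPval : L.phiProd d = (∏ j ∈ Finset.range d, (L.θsN 0 - L.θsN (j+1)))
      * ((f 0 ⬝ᵥ ψ 0)
          * ((((List.range d).map (fun j => L.θN (d - j))).map (fun c => L.θ 0 - c)).prod)
          * (g 0 ⬝ᵥ χ 0)) := by
    rw [hteleH d le_rfl, hH d, hconcE _ (ψ 0) 0 hzη, dotProduct_smul, smul_eq_mul]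
  -- the key identity
  have hxsd : ∀ j : Fin (d+1), (j:ℕ) < d → (fun t => g t ⬝ᵥ ψ (Fin.last d)) j = 0 := by
    intro j hj
    show g j ⬝ᵥ ψ (Fin.last d) = 0
    rw [hδs, if_neg (fun h => by rw [h] at hj; simp at hj)]
  have hlen_tau : ((List.range d).map L.θN).length = d := by
    rw [List.length_map, List.length_range]
  have hlen_eta : ((List.range d).map (fun j => L.θN (d - j))).length = d := by
    rw [List.length_map, List.length_range]
  have hKEY : (f (Fin.last d) ⬝ᵥ ψ (Fin.last d))
        * ((((List.range d).map L.θN).map (fun c => L.θ (Fin.last d) - c)).prod)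
        * (g 0 ⬝ᵥ χ (Fin.last d))
      = (f 0 ⬝ᵥ ψ (Fin.last d))
        * ((((List.range d).map (fun j => L.θN (d - j))).map (fun c => L.θ 0 - c)).prod)
        * (g 0 ⬝ᵥ χ 0) := by
    obtain ⟨_, Hv1⟩ := LSAux.low (fun a b => g a ⬝ᵥ (L.A *ᵥ ψ b))
      (fun a b h => hmE0 a b (Or.inr h)) ((List.range d).map L.θN) d
      (by omega) (by omega) (fun t => g t ⬝ᵥ ψ (Fin.last d)) hxsd
    obtain ⟨_, Hv2⟩ := LSAux.low (fun a b => g a ⬝ᵥ (L.A *ᵥ ψ b))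
      (fun a b h => hmE0 a b (Or.inr h)) ((List.range d).map (fun j => L.θN (d - j))) d
      (by omega) (by omega) (fun t => g t ⬝ᵥ ψ (Fin.last d)) hxsd
    have h1 := Hv1 0 (by simp [hlen_tau]) (Fin.last d) rfl
    have h2 := Hv2 0 (by simp [hlen_eta]) (Fin.last d) rfl
    rw [hlen_tau] at h1
    rw [hlen_eta] at h2
    have hK : g 0 ⬝ᵥ (LSAux.matP L.A ((List.range d).map L.θN) *ᵥ ψ (Fin.last d))
        = g 0 ⬝ᵥ (LSAux.matP L.A ((List.range d).map (fun j => L.θN (d - j)))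
            *ᵥ ψ (Fin.last d)) := by
      rw [htransS, htransS, h1, h2]
    rw [hconcE _ (ψ (Fin.last d)) (Fin.last d) hzτ, hconcE _ (ψ (Fin.last d)) 0 hzη,
      dotProduct_smul, dotProduct_smul, smul_eq_mul, smul_eq_mul] at hK
    exact hK
  -- sigma fixes the extreme idempotents
  have hσE0 : σ (L.E 0) = L.E 0 := by
    have hP := LSAux.matP_eq_sum L.E L.E_mul L.E_sum L.θ L.A L.A_eq
      ((List.range d).map (fun j => L.θN (d - j)))
    have hP0 : LSAux.matP L.A ((List.range d).map (fun j => L.θN (d - j)))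
        = ((((List.range d).map (fun j => L.θN (d - j))).map (fun c => L.θ 0 - c)).prod)
          • L.E 0 := by
      rw [hP, Finset.sum_eq_single 0]
      · intro t _ ht
        rw [hzη t ht, zero_smul]
      · intro h; exact absurd (Finset.mem_univ _) h
    have hσP := LSAux.sigma_matP σ hanti hσ1 L.A hA ((List.range d).map (fun j => L.θN (d - j)))
    rw [hP0, LinearMap.map_smul] at hσP
    exact smul_right_injective _ hηSne hσP
  have hσEd : σ (L.E (Fin.last d)) = L.E (Fin.last d) := by
    have hP := LSAux.matP_eq_sum L.E L.E_mul L.E_sum L.θ L.A L.A_eq ((List.range d).map L.θN)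
    have hP0 : LSAux.matP L.A ((List.range d).map L.θN)
        = ((((List.range d).map L.θN).map (fun c => L.θ (Fin.last d) - c)).prod)
          • L.E (Fin.last d) := by
      rw [hP, Finset.sum_eq_single (Fin.last d)]
      · intro t _ ht
        rw [hzτ t ht, zero_smul]
      · intro h; exact absurd (Finset.mem_univ _) h
    have hσP := LSAux.sigma_matP σ hanti hσ1 L.A hA ((List.range d).map L.θN)
    rw [hP0, LinearMap.map_smul] at hσP
    exact smul_right_injective _ hτSne hσP
  have hσEs0 : σ (L.Estar 0) = L.Estar 0 := by
    have hP := LSAux.matP_eq_sum L.Estar L.Es_mul L.Es_sum L.θs L.Astar L.As_eq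
      ((List.range d).map (fun j => L.θsN (d - j)))
    have hP0 : LSAux.matP L.Astar ((List.range d).map (fun j => L.θsN (d - j)))
        = ((((List.range d).map (fun j => L.θsN (d - j))).map (fun c => L.θs 0 - c)).prod)
          • L.Estar 0 := by
      rw [hP, Finset.sum_eq_single 0]
      · intro t _ ht
        rw [hzηs t ht, zero_smul]
      · intro h; exact absurd (Finset.mem_univ _) h
    have hσP := LSAux.sigma_matP σ hanti hσ1 L.Astar hAs
      ((List.range d).map (fun j => L.θsN (d - j)))
    rw [hP0, LinearMap.map_smul] at hσP
    exact smul_right_injective _ hetas_ne hσP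
  -- decompositions of the given vectors
  have hBmove : ∀ (X : Matrix (Fin (d+1)) (Fin (d+1)) K), σ X = X →
      ∀ u v' : Fin (d+1) → K, B (X *ᵥ u) v' = B u (X *ᵥ v') := by
    intro X hX u v'
    rw [hcomp, hX]
  have hξ0coord : ∀ j : Fin (d+1), j ≠ 0 → f j ⬝ᵥ ξ0 = 0 := by
    intro j hj
    have h1 : L.E j *ᵥ ξ0 = 0 := by
      rw [← hE0, Matrix.mulVec_mulVec, L.E_mul, if_neg hj, Matrix.zero_mulVec]
    rw [hEv] at h1
    rcases smul_eq_zero.1 h1 with h2 | h2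
    · exact h2
    · exact absurd h2 (hχne j)
  have hξ0eq : ξ0 = (f 0 ⬝ᵥ ξ0) • χ 0 := by
    conv_lhs => rw [← hcomplE ξ0]
    rw [Finset.sum_eq_single 0]
    · intro j _ hj
      rw [hξ0coord j hj, zero_smul]
    · intro h; exact absurd (Finset.mem_univ _) h
  have hξdcoord : ∀ j : Fin (d+1), j ≠ Fin.last d → f j ⬝ᵥ ξd = 0 := by
    intro j hj
    have h1 : L.E j *ᵥ ξd = 0 := by
      rw [← hEd, Matrix.mulVec_mulVec, L.E_mul, if_neg hj, Matrix.zero_mulVec]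
    rw [hEv] at h1
    rcases smul_eq_zero.1 h1 with h2 | h2
    · exact h2
    · exact absurd h2 (hχne j)
  have hξdeq : ξd = (f (Fin.last d) ⬝ᵥ ξd) • χ (Fin.last d) := by
    conv_lhs => rw [← hcomplE ξd]
    rw [Finset.sum_eq_single (Fin.last d)]
    · intro j _ hj
      rw [hξdcoord j hj, zero_smul]
    · intro h; exact absurd (Finset.mem_univ _) h
  have hξs0coord : ∀ j : Fin (d+1), j ≠ 0 → g j ⬝ᵥ ξs0 = 0 := by
    intro j hj
    have h1 : L.Estar j *ᵥ ξs0 = 0 := by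
      rw [← hEs0, Matrix.mulVec_mulVec, L.Es_mul, if_neg hj, Matrix.zero_mulVec]
    rw [hSv] at h1
    rcases smul_eq_zero.1 h1 with h2 | h2
    · exact h2
    · exact absurd h2 (hψne j)
  have hξs0eq : ξs0 = (g 0 ⬝ᵥ ξs0) • ψ 0 := by
    conv_lhs => rw [← hcomplS ξs0]
    rw [Finset.sum_eq_single 0]
    · intro j _ hj
      rw [hξs0coord j hj, zero_smul]
    · intro h; exact absurd (Finset.mem_univ _) h
  have hξsdcoord : ∀ j : Fin (d+1), j ≠ Fin.last d → g j ⬝ᵥ ξsd = 0 := by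
    intro j hj
    have h1 : L.Estar j *ᵥ ξsd = 0 := by
      rw [← hEsd, Matrix.mulVec_mulVec, L.Es_mul, if_neg hj, Matrix.zero_mulVec]
    rw [hSv] at h1
    rcases smul_eq_zero.1 h1 with h2 | h2
    · exact h2
    · exact absurd h2 (hψne j)
  have hξsdeq : ξsd = (g (Fin.last d) ⬝ᵥ ξsd) • ψ (Fin.last d) := by
    conv_lhs => rw [← hcomplS ξsd]
    rw [Finset.sum_eq_single (Fin.last d)]
    · intro j _ hj
      rw [hξsdcoord j hj, zero_smul]
    · intro h; exact absurd (Finset.mem_univ _) h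
  have he0 : f 0 ⬝ᵥ ξ0 ≠ 0 := by
    intro h
    apply hξ0
    rw [hξ0eq, h, zero_smul]
  have hed : f (Fin.last d) ⬝ᵥ ξd ≠ 0 := by
    intro h
    apply hξd
    rw [hξdeq, h, zero_smul]
  have hs0 : g 0 ⬝ᵥ ξs0 ≠ 0 := by
    intro h
    apply hξs0
    rw [hξs0eq, h, zero_smul]
  have hsd : g (Fin.last d) ⬝ᵥ ξsd ≠ 0 := by
    intro h
    apply hξsd
    rw [hξsdeq, h, zero_smul]
  -- B relations
  have hp00 : B (χ 0) (ψ 0) = (f 0 ⬝ᵥ ψ 0) * B (χ 0) (χ 0) := by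
    conv_lhs => rw [← hχfix 0]
    rw [hBmove (L.E 0) hσE0, hEv, LinearMap.map_smul, smul_eq_mul]
  have hp0d : B (χ 0) (ψ (Fin.last d)) = (f 0 ⬝ᵥ ψ (Fin.last d)) * B (χ 0) (χ 0) := by
    conv_lhs => rw [← hχfix 0]
    rw [hBmove (L.E 0) hσE0, hEv, LinearMap.map_smul, smul_eq_mul]
  have hpd0 : B (χ (Fin.last d)) (ψ 0)
      = (f (Fin.last d) ⬝ᵥ ψ 0) * B (χ (Fin.last d)) (χ (Fin.last d)) := by
    conv_lhs => rw [← hχfix (Fin.last d)]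
    rw [hBmove (L.E (Fin.last d)) hσEd, hEv, LinearMap.map_smul, smul_eq_mul]
  have hpdd : B (χ (Fin.last d)) (ψ (Fin.last d))
      = (f (Fin.last d) ⬝ᵥ ψ (Fin.last d)) * B (χ (Fin.last d)) (χ (Fin.last d)) := by
    conv_lhs => rw [← hχfix (Fin.last d)]
    rw [hBmove (L.E (Fin.last d)) hσEd, hEv, LinearMap.map_smul, smul_eq_mul]
  have hq00 : B (χ 0) (ψ 0) = (g 0 ⬝ᵥ χ 0) * B (ψ 0) (ψ 0) := by
    conv_lhs => rw [← hψfix 0]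
    rw [← hBmove (L.Estar 0) hσEs0, hSv, LinearMap.map_smul, LinearMap.smul_apply, smul_eq_mul]
  have hq0d : B (χ (Fin.last d)) (ψ 0) = (g 0 ⬝ᵥ χ (Fin.last d)) * B (ψ 0) (ψ 0) := by
    conv_lhs => rw [← hψfix 0]
    rw [← hBmove (L.Estar 0) hσEs0, hSv, LinearMap.map_smul, LinearMap.smul_apply, smul_eq_mul]
  -- rewrite the four bilinear values
  have hv1 : B ξ0 ξs0 = (f 0 ⬝ᵥ ξ0) * ((g 0 ⬝ᵥ ξs0)
      * ((f 0 ⬝ᵥ ψ 0) * B (χ 0) (χ 0))) := by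
    conv_lhs => rw [hξ0eq, hξs0eq]
    rw [LinearMap.map_smul, LinearMap.map_smul, LinearMap.smul_apply, hp00, smul_eq_mul,
      smul_eq_mul]
    ring
  have hv2 : B ξ0 ξsd = (f 0 ⬝ᵥ ξ0) * ((g (Fin.last d) ⬝ᵥ ξsd)
      * ((f 0 ⬝ᵥ ψ (Fin.last d)) * B (χ 0) (χ 0))) := by
    conv_lhs => rw [hξ0eq, hξsdeq]
    rw [LinearMap.map_smul, LinearMap.map_smul, LinearMap.smul_apply, hp0d, smul_eq_mul,
      smul_eq_mul]
    ring
  have hv3 : B ξd ξs0 = (f (Fin.last d) ⬝ᵥ ξd) * ((g 0 ⬝ᵥ ξs0)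
      * ((f (Fin.last d) ⬝ᵥ ψ 0) * B (χ (Fin.last d)) (χ (Fin.last d)))) := by
    conv_lhs => rw [hξdeq, hξs0eq]
    rw [LinearMap.map_smul, LinearMap.map_smul, LinearMap.smul_apply, hpd0, smul_eq_mul,
      smul_eq_mul]
    ring
  have hv4 : B ξd ξsd = (f (Fin.last d) ⬝ᵥ ξd) * ((g (Fin.last d) ⬝ᵥ ξsd)
      * ((f (Fin.last d) ⬝ᵥ ψ (Fin.last d)) * B (χ (Fin.last d)) (χ (Fin.last d)))) := by
    conv_lhs => rw [hξdeq, hξsdeq]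
    rw [LinearMap.map_smul, LinearMap.map_smul, LinearMap.smul_apply, hpdd, smul_eq_mul,
      smul_eq_mul]
    ring
  -- nonzero scalars
  have hΘs : (∏ j ∈ Finset.range d, (L.θsN 0 - L.θsN (j+1))) ≠ 0 := by
    rw [Finset.prod_ne_zero_iff]
    intro j hj
    have hj' : j < d := Finset.mem_range.1 hj
    simp only [LeonardSystem.θsN]
    rw [dif_pos (show (0:ℕ) < d+1 by omega), dif_pos (show j+1 < d+1 by omega)]
    intro h
    have h2 := L.θs_inj (sub_eq_zero.1 h)
    have h3 := congrArg Fin.val h2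
    simp at h3
  -- final assembly
  rw [hv1, hv2, hv3, hv4, hφPval, hϕPval]
  exact LSAux.final_algebra _ _ _ _ _ _ _ _ _ _ _ _ _ _ _ _
    he0 hed hs0 hsd (hfψ0 0) (hfψd 0) (hfψ0 (Fin.last d)) (hfψd (Fin.last d))
    (hgχ0 0) (hgχd 0) hτSne hηSne hΘs
    (hp00.symm.trans hq00) (hpd0.symm.trans hq0d) hKEY
end

section
/- Let Φ be a Leonard system acting on V, with nonzero ξ*_0 ∈ E*_0V. Then the linear map ∑_{r=0}^d (E_r E*_0 E_r)/tr(E_r E*_0) acts as the identity on each basis vector E_i ξ*_0; more generally, for any sequence X_0,…,X_d taken from one of the families {E_i}, {E_{d−i}}, {τ_i(A)}, {τ_{d−i}(A)}, {η_i(A)}, {η_{d−i}(A)}, the map ∑_{r=0}^d X_r E*_0 E_r / tr(E_r E*_0) sends E_i ξ*_0 to X_i ξ*_0 for 0 ≤ i ≤ d. -/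
open Matrix Polynomial

namespace LeonardAux
open Module
variable {K : Type*} [Field K] {d : ℕ}


lemma mul_vecMulVec (X : Matrix (Fin (d+1)) (Fin (d+1)) K) (u v : Fin (d+1) → K) :
    X * vecMulVec u v = vecMulVec (X *ᵥ u) v := by
  ext a b
  simp [Matrix.mul_apply, vecMulVec_apply, Matrix.mulVec, dotProduct, Finset.sum_mul, mul_assoc]

lemma vecMulVec_mul (u v : Fin (d+1) → K) (Y : Matrix (Fin (d+1)) (Fin (d+1)) K) :
    vecMulVec u v * Y = vecMulVec u (v ᵥ* Y) := by
  ext a b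
  simp [Matrix.mul_apply, vecMulVec_apply, Matrix.vecMul, dotProduct, Finset.mul_sum, mul_assoc,
    mul_left_comm]

lemma vecMulVec_eq_zero_iff {u v : Fin (d+1) → K} :
    vecMulVec u v = 0 ↔ u = 0 ∨ v = 0 := by
  constructor
  · intro h
    by_contra hc
    push_neg at hc
    obtain ⟨hu, hv⟩ := hc
    obtain ⟨a, ha⟩ := Function.ne_iff.mp hu
    obtain ⟨b, hb⟩ := Function.ne_iff.mp hv
    have := congrFun (congrFun h a) b
    simp [vecMulVec_apply] at this
    rcases this with h1 | h1 <;> simp_all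
  · rintro (rfl | rfl) <;> ext a b <;> simp [vecMulVec_apply]

lemma cancel_left {u v : Fin (d+1) → K} {X Y : Matrix (Fin (d+1)) (Fin (d+1)) K}
    (h : X * vecMulVec u v * Y = 0) (h2 : vecMulVec u v * Y ≠ 0) :
    X * vecMulVec u v = 0 := by
  rw [vecMulVec_mul] at h2
  rw [mul_vecMulVec, vecMulVec_mul] at h
  rcases vecMulVec_eq_zero_iff.mp h with h1 | h1
  · rw [mul_vecMulVec, h1]
    exact vecMulVec_eq_zero_iff.mpr (Or.inl rfl)
  · exact absurd (vecMulVec_eq_zero_iff.mpr (Or.inr h1)) h2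

lemma cancel_right {u v : Fin (d+1) → K} {X Y : Matrix (Fin (d+1)) (Fin (d+1)) K}
    (h : X * vecMulVec u v * Y = 0) (h2 : X * vecMulVec u v ≠ 0) :
    vecMulVec u v * Y = 0 := by
  rw [mul_vecMulVec] at h2
  rw [mul_vecMulVec, vecMulVec_mul] at h
  rcases vecMulVec_eq_zero_iff.mp h with h1 | h1
  · exact absurd (vecMulVec_eq_zero_iff.mpr (Or.inl h1)) h2
  · rw [vecMulVec_mul, h1]
    exact vecMulVec_eq_zero_iff.mpr (Or.inr rfl)

lemma absorb (u v : Fin (d+1) → K) (B : Matrix (Fin (d+1)) (Fin (d+1)) K) :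
    vecMulVec u v * B * vecMulVec u v = (B * vecMulVec u v).trace • vecMulVec u v := by
  rw [vecMulVec_mul, mul_vecMulVec]
  ext a b
  simp only [vecMulVec_apply, Matrix.smul_apply, Matrix.trace, Matrix.diag, Matrix.mul_apply,
    vecMulVec_apply, Matrix.vecMul, Matrix.mulVec, dotProduct, smul_eq_mul, Finset.sum_mul,
    Finset.mul_sum]
  rw [Finset.sum_comm]
  exact Finset.sum_congr rfl fun c _ => Finset.sum_congr rfl fun f _ => by ring



lemma sum_mulVec {s : Finset (Fin (d+1))} (M : Fin (d+1) → Matrix (Fin (d+1)) (Fin (d+1)) K)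
    (w : Fin (d+1) → K) : (∑ r ∈ s, M r) *ᵥ w = ∑ r ∈ s, M r *ᵥ w := by
  ext a
  simp only [Matrix.mulVec, dotProduct, Matrix.sum_apply, Finset.sum_mul, Finset.sum_apply]
  rw [Finset.sum_comm]

lemma exists_vecMulVec (E : Fin (d+1) → Matrix (Fin (d+1)) (Fin (d+1)) K)
    (hmul : ∀ i j, E i * E j = if i = j then E i else 0)
    (hsum : ∑ i, E i = 1) (hne : ∀ i, E i ≠ 0) (i : Fin (d+1)) :
    ∃ u v : Fin (d+1) → K, E i = vecMulVec u v := by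
  set W : Fin (d+1) → Submodule K (Fin (d+1) → K) :=
    fun j => LinearMap.range (Matrix.mulVecLin (E j)) with hW
  -- the summing map from the product of the ranges is injective
  set φ : ((j : Fin (d+1)) → W j) →ₗ[K] (Fin (d+1) → K) :=
    ∑ j, (W j).subtype ∘ₗ LinearMap.proj j with hφ
  have hφ_apply : ∀ w, φ w = ∑ j, (w j : Fin (d+1) → K) := by
    intro w
    simp [hφ, LinearMap.sum_apply]
  have hEw : ∀ (k : Fin (d+1)) (w : (j : Fin (d+1)) → W j),
      (E k) *ᵥ (φ w) = (w k : Fin (d+1) → K) := by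
    intro k w
    have hy : ∀ j, ∃ y, (E j) *ᵥ y = (w j : Fin (d+1) → K) := fun j => (w j).2
    choose y hy using hy
    rw [hφ_apply]
    calc (E k) *ᵥ ∑ j, (w j : Fin (d+1) → K)
        = ∑ j, (E k) *ᵥ ((E j) *ᵥ y j) := by
          have hms : (E k) *ᵥ (∑ j, (w j : Fin (d+1) → K)) = ∑ j, (E k) *ᵥ (w j : Fin (d+1) → K) := by
            exact map_sum ((E k).mulVecLin) (fun j => (w j : Fin (d+1) → K)) Finset.univ
          rw [hms]
          exact Finset.sum_congr rfl fun j _ => by rw [hy]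
      _ = ∑ j, (if k = j then E k else 0) *ᵥ y j := by
          refine Finset.sum_congr rfl fun j _ => ?_
          rw [Matrix.mulVec_mulVec, hmul]
      _ = (w k : Fin (d+1) → K) := by
          rw [Finset.sum_eq_single k]
          · simp [hy]
          · intro b _ hb; simp [(Ne.symm hb : ¬ k = b)]
          · simp
  have hinj : Function.Injective φ := by
    rw [injective_iff_map_eq_zero]
    intro w hw
    funext k
    have := hEw k w
    rw [hw] at this
    exact Subtype.ext (by simpa using this.symm)
  have hrank : ∑ j, finrank K (W j) ≤ d + 1 := by
    have h1 : finrank K ((j : Fin (d+1)) → W j) ≤ finrank K (Fin (d+1) → K) :=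
      LinearMap.finrank_le_finrank_of_injective hinj
    rwa [Module.finrank_pi_fintype, Module.finrank_pi, Fintype.card_fin] at h1
  have hpos : ∀ j, 1 ≤ finrank K (W j) := by
    intro j
    by_contra h
    push_neg at h
    interval_cases h' : finrank K (W j)
    · have hbot : W j = ⊥ := Submodule.finrank_eq_zero.mp h'
      apply hne j
      ext a b
      have : (E j) *ᵥ Pi.single b 1 ∈ W j := ⟨Pi.single b 1, rfl⟩
      rw [hbot, Submodule.mem_bot] at this
      have := congrFun this a
      simpa [Matrix.mulVec_single] using this
  have hone : finrank K (W i) = 1 := by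
    by_contra h
    have h2 : 2 ≤ finrank K (W i) := by
      have := hpos i
      omega
    have : d + 2 ≤ ∑ j, finrank K (W j) := by
      calc d + 2 = ∑ j : Fin (d+1), (if j = i then 2 else 1) := by
            have hsplit : ∀ j : Fin (d+1), (if j = i then 2 else 1) = 1 + (if j = i then 1 else 0) := by
              intro j; split <;> rfl
            simp only [hsplit]
            rw [Finset.sum_add_distrib, Finset.sum_const, Finset.card_univ, Fintype.card_fin,
              Finset.sum_ite_eq' Finset.univ i (fun _ => 1)]
            simp [smul_eq_mul]
        _ ≤ ∑ j, finrank K (W j) := by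
            refine Finset.sum_le_sum fun j _ => ?_
            by_cases hj : j = i
            · rw [hj]; simpa using h2
            · simpa [hj] using hpos j
    omega
  obtain ⟨v0, hv0ne, hv0⟩ := finrank_eq_one_iff'.mp hone
  set u : Fin (d+1) → K := (v0 : Fin (d+1) → K) with hu
  have hcol : ∀ b : Fin (d+1), ∃ c : K, c • u = fun a => E i a b := by
    intro b
    have hmem : (fun a => E i a b) ∈ W i := by
      refine ⟨Pi.single b 1, ?_⟩
      ext a
      simp [Matrix.mulVec_single]
    obtain ⟨c, hc⟩ := hv0 ⟨_, hmem⟩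
    exact ⟨c, congrArg Subtype.val hc⟩
  choose cfun hc using hcol
  refine ⟨u, cfun, ?_⟩
  ext a b
  have := congrFun (hc b) a
  simp only [Pi.smul_apply, smul_eq_mul] at this
  rw [vecMulVec_apply, ← this, mul_comm]



structure IdemSys (K : Type*) [Field K] (d : ℕ) where
  A : Matrix (Fin (d+1)) (Fin (d+1)) K
  E : Fin (d+1) → Matrix (Fin (d+1)) (Fin (d+1)) K
  Estar : Fin (d+1) → Matrix (Fin (d+1)) (Fin (d+1)) K
  θ : Fin (d+1) → K
  E_ne : ∀ i, E i ≠ 0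
  Es_ne : ∀ i, Estar i ≠ 0
  E_mul : ∀ i j, E i * E j = if i = j then E i else 0
  Es_mul : ∀ i j, Estar i * Estar j = if i = j then Estar i else 0
  E_sum : ∑ i, E i = 1
  Es_sum : ∑ i, Estar i = 1
  A_eq : A = ∑ i, θ i • E i
  strid0 : ∀ i j : Fin (d+1), ((i : ℤ) - (j : ℤ)).natAbs > 1 → Estar i * A * Estar j = 0
  strid1 : ∀ i j : Fin (d+1), ((i : ℤ) - (j : ℤ)).natAbs = 1 → Estar i * A * Estar j ≠ 0

namespace IdemSys
variable (S : IdemSys K d)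

lemma E_mul_A (r : Fin (d+1)) : S.E r * S.A = S.θ r • S.E r := by
  rw [S.A_eq, Finset.mul_sum]
  calc ∑ i, S.E r * (S.θ i • S.E i) = ∑ i, if r = i then S.θ i • S.E r else 0 := by
        refine Finset.sum_congr rfl fun i _ => ?_
        rw [mul_smul_comm, S.E_mul]
        split <;> simp
    _ = S.θ r • S.E r := by rw [Finset.sum_ite_eq Finset.univ r (fun i => S.θ i • S.E r)]; simp

lemma A_mul_E (r : Fin (d+1)) : S.A * S.E r = S.θ r • S.E r := by
  rw [S.A_eq, Finset.sum_mul]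
  calc ∑ i, (S.θ i • S.E i) * S.E r = ∑ i, if i = r then S.θ i • S.E r else 0 := by
        refine Finset.sum_congr rfl fun i _ => ?_
        rw [smul_mul_assoc, S.E_mul]
        split <;> simp_all
    _ = S.θ r • S.E r := by rw [Finset.sum_ite_eq' Finset.univ r (fun i => S.θ i • S.E r)]; simp

lemma esfac : ∀ j, ∃ u v : Fin (d+1) → K, S.Estar j = vecMulVec u v :=
  exists_vecMulVec S.Estar S.Es_mul S.Es_sum S.Es_ne

lemma efac : ∀ j, ∃ u v : Fin (d+1) → K, S.E j = vecMulVec u v :=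
  exists_vecMulVec S.E S.E_mul S.E_sum S.E_ne

/-- `E_r E*_0 ≠ 0`. -/
lemma claim1 (r : Fin (d+1)) : S.E r * S.Estar 0 ≠ 0 := by
  intro h0
  have key : ∀ j : ℕ, ∀ hj : j < d + 1, S.E r * S.Estar ⟨j, hj⟩ = 0 := by
    intro j
    induction j using Nat.strong_induction_on with
    | _ j IH =>
      cases j with
      | zero =>
        intro hj
        have h00 : (⟨0, hj⟩ : Fin (d+1)) = 0 := rfl
        rw [h00]; exact h0
      | succ k =>
        intro hj
        have hk : k < d + 1 := by omega
        have hEA : S.E r * S.A * S.Estar ⟨k, hk⟩ = 0 := by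
          rw [S.E_mul_A, smul_mul_assoc, IH k (by omega) hk, smul_zero]
        have hexp : S.E r * S.A * S.Estar ⟨k, hk⟩
            = ∑ t, S.E r * (S.Estar t * S.A * S.Estar ⟨k, hk⟩) := by
          calc S.E r * S.A * S.Estar ⟨k, hk⟩
              = S.E r * ((∑ t, S.Estar t) * (S.A * S.Estar ⟨k, hk⟩)) := by
                rw [S.Es_sum, one_mul, mul_assoc]
            _ = ∑ t, S.E r * (S.Estar t * S.A * S.Estar ⟨k, hk⟩) := by
                rw [Finset.sum_mul, Finset.mul_sum]
                exact Finset.sum_congr rfl fun t _ => by rw [mul_assoc]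
        have hsingle : ∑ t, S.E r * (S.Estar t * S.A * S.Estar ⟨k, hk⟩)
            = S.E r * (S.Estar ⟨k+1, hj⟩ * S.A * S.Estar ⟨k, hk⟩) := by
          refine Finset.sum_eq_single _ (fun t _ ht => ?_) (by simp)
          rcases Nat.lt_or_ge (t : ℕ) (k+1) with h' | h'
          · have hIH : S.E r * S.Estar t = 0 := by
              have := IH t.val (by omega) t.isLt
              simpa using this
            rw [show S.Estar t * S.A * S.Estar ⟨k, hk⟩
                = S.Estar t * (S.A * S.Estar ⟨k, hk⟩) from mul_assoc _ _ _,
              ← mul_assoc, hIH, zero_mul]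
          · have ht' : (t : ℕ) ≠ k + 1 := fun hh => ht (Fin.ext hh)
            have hz : S.Estar t * S.A * S.Estar ⟨k, hk⟩ = 0 := by
              refine S.strid0 t ⟨k, hk⟩ ?_
              simp only [Fin.val]
              omega
            rw [hz, mul_zero]
        have hz : S.E r * (S.Estar ⟨k+1, hj⟩ * S.A * S.Estar ⟨k, hk⟩) = 0 := by
          rw [← hsingle, ← hexp, hEA]
        obtain ⟨u, v, huv⟩ := S.esfac ⟨k+1, hj⟩
        have hne1 : S.Estar ⟨k+1, hj⟩ * (S.A * S.Estar ⟨k, hk⟩) ≠ 0 := by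
          have := S.strid1 ⟨k+1, hj⟩ ⟨k, hk⟩ (by simp only [Fin.val]; omega)
          rwa [mul_assoc] at this
        have hz' : S.E r * vecMulVec u v * (S.A * S.Estar ⟨k, hk⟩) = 0 := by
          rw [mul_assoc, ← huv, ← mul_assoc (S.Estar ⟨k+1, hj⟩)]
          exact hz
        have := cancel_left hz' (by rw [← huv]; exact hne1)
        rwa [← huv] at this
  have hE0 : S.E r = 0 := by
    calc S.E r = S.E r * 1 := (mul_one _).symm
      _ = ∑ t, S.E r * S.Estar t := by rw [← S.Es_sum, Finset.mul_sum]
      _ = 0 := Finset.sum_eq_zero fun t _ => by simpa using key t.val t.isLt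
  exact S.E_ne r hE0

/-- `E*_0 E_r ≠ 0`. -/
lemma claim2 (r : Fin (d+1)) : S.Estar 0 * S.E r ≠ 0 := by
  intro h0
  have key : ∀ j : ℕ, ∀ hj : j < d + 1, S.Estar ⟨j, hj⟩ * S.E r = 0 := by
    intro j
    induction j using Nat.strong_induction_on with
    | _ j IH =>
      cases j with
      | zero =>
        intro hj
        have h00 : (⟨0, hj⟩ : Fin (d+1)) = 0 := rfl
        rw [h00]; exact h0
      | succ k =>
        intro hj
        have hk : k < d + 1 := by omega
        have hEA : S.Estar ⟨k, hk⟩ * S.A * S.E r = 0 := by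
          rw [mul_assoc, S.A_mul_E, mul_smul_comm, IH k (by omega) hk, smul_zero]
        have hexp : S.Estar ⟨k, hk⟩ * S.A * S.E r
            = ∑ t, S.Estar ⟨k, hk⟩ * S.A * S.Estar t * S.E r := by
          calc S.Estar ⟨k, hk⟩ * S.A * S.E r
              = S.Estar ⟨k, hk⟩ * S.A * ((∑ t, S.Estar t) * S.E r) := by
                rw [S.Es_sum, one_mul]
            _ = ∑ t, S.Estar ⟨k, hk⟩ * S.A * S.Estar t * S.E r := by
                rw [Finset.sum_mul, Finset.mul_sum]
                exact Finset.sum_congr rfl fun t _ => by simp only [mul_assoc]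
        have hsingle : ∑ t, S.Estar ⟨k, hk⟩ * S.A * S.Estar t * S.E r
            = S.Estar ⟨k, hk⟩ * S.A * S.Estar ⟨k+1, hj⟩ * S.E r := by
          refine Finset.sum_eq_single _ (fun t _ ht => ?_) (by simp)
          rcases Nat.lt_or_ge (t : ℕ) (k+1) with h' | h'
          · have hIH : S.Estar t * S.E r = 0 := by
              have := IH t.val (by omega) t.isLt
              simpa using this
            rw [mul_assoc, hIH, mul_zero]
          · have ht' : (t : ℕ) ≠ k + 1 := fun hh => ht (Fin.ext hh)
            have hz : S.Estar ⟨k, hk⟩ * S.A * S.Estar t = 0 := by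
              refine S.strid0 ⟨k, hk⟩ t ?_
              simp only [Fin.val]
              omega
            rw [hz, zero_mul]
        have hz : S.Estar ⟨k, hk⟩ * S.A * S.Estar ⟨k+1, hj⟩ * S.E r = 0 := by
          rw [← hsingle, ← hexp, hEA]
        obtain ⟨u, v, huv⟩ := S.esfac ⟨k+1, hj⟩
        have hne1 : S.Estar ⟨k, hk⟩ * S.A * S.Estar ⟨k+1, hj⟩ ≠ 0 :=
          S.strid1 ⟨k, hk⟩ ⟨k+1, hj⟩ (by simp only [Fin.val]; omega)
        have hz' : S.Estar ⟨k, hk⟩ * S.A * vecMulVec u v * S.E r = 0 := by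
          rw [← huv]; exact hz
        have := cancel_right hz' (by rw [← huv]; exact hne1)
        rwa [← huv] at this
  have hE0 : S.E r = 0 := by
    calc S.E r = 1 * S.E r := (one_mul _).symm
      _ = ∑ t, S.Estar t * S.E r := by rw [← S.Es_sum, Finset.sum_mul]
      _ = 0 := Finset.sum_eq_zero fun t _ => by simpa using key t.val t.isLt
  exact S.E_ne r hE0

lemma trace_ne (r : Fin (d+1)) : (S.E r * S.Estar 0).trace ≠ 0 := by
  intro h
  obtain ⟨u, v, huv⟩ := S.esfac 0
  have habs : S.Estar 0 * S.E r * S.Estar 0 = (S.E r * S.Estar 0).trace • S.Estar 0 := by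
    conv_lhs => rw [huv]
    rw [absorb u v (S.E r), ← huv]
  rw [h, zero_smul] at habs
  obtain ⟨u', v', huv'⟩ := S.efac r
  have hz' : S.Estar 0 * vecMulVec u' v' * S.Estar 0 = 0 := by rw [← huv']; exact habs
  have := cancel_right hz' (by rw [← huv']; exact S.claim2 r)
  rw [← huv'] at this
  exact S.claim1 r this

end IdemSys

end LeonardAux

/-- The map `∑_r (E_r E*_0 E_r)/tr(E_r E*_0)` is the identity on each basis
vector `E_i ξ*_0`, and more generally `∑_r X_r E*_0 E_r / tr(E_r E*_0)` sends
`E_i ξ*_0` to `X_i ξ*_0` for each of the six families of `X`'s. -/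
theorem LeonardSystem.transition_from_Eixs0 {K : Type*} [Field K] {d : ℕ}
    (L : LeonardSystem K d) (ξs0 : Fin (d+1) → K) (hξs0 : ξs0 ≠ 0)
    (hEs0 : (L.Estar 0).mulVec ξs0 = ξs0) :
    (∀ i : Fin (d+1),
      (∑ r : Fin (d+1), ((L.E r * L.Estar 0).trace)⁻¹ • (L.E r * L.Estar 0 * L.E r)).mulVec
        ((L.E i).mulVec ξs0) = (L.E i).mulVec ξs0) ∧
    (∀ X : Fin (d+1) → Matrix (Fin (d+1)) (Fin (d+1)) K,
      (X = L.E ∨ X = (fun i => L.E i.rev) ∨ X = (fun (i : Fin (d+1)) => L.tauA (i : ℕ)) ∨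
       X = (fun (i : Fin (d+1)) => L.tauA (d - (i : ℕ))) ∨ X = (fun (i : Fin (d+1)) => L.etaA (i : ℕ)) ∨
       X = (fun (i : Fin (d+1)) => L.etaA (d - (i : ℕ)))) →
      ∀ i : Fin (d+1),
        (∑ r : Fin (d+1), ((L.E r * L.Estar 0).trace)⁻¹ • (X r * L.Estar 0 * L.E r)).mulVec
          ((L.E i).mulVec ξs0) = (X i).mulVec ξs0) := by
  set S : LeonardAux.IdemSys K d :=
    ⟨L.A, L.E, L.Estar, L.θ, L.E_ne, L.Es_ne, L.E_mul, L.Es_mul, L.E_sum, L.Es_sum, L.A_eq,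
      L.strid0, L.strid1⟩ with hS
  have hgen : ∀ X : Fin (d+1) → Matrix (Fin (d+1)) (Fin (d+1)) K, ∀ i : Fin (d+1),
      (∑ r : Fin (d+1), ((L.E r * L.Estar 0).trace)⁻¹ • (X r * L.Estar 0 * L.E r)).mulVec
        ((L.E i).mulVec ξs0) = (X i).mulVec ξs0 := by
    intro X i
    have htr : (L.E i * L.Estar 0).trace ≠ 0 := S.trace_ne i
    obtain ⟨u, v, huv⟩ := S.esfac 0
    have h1 : L.Estar 0 = Matrix.vecMulVec u v := huv
    have habs : L.Estar 0 * L.E i * L.Estar 0 = (L.E i * L.Estar 0).trace • L.Estar 0 := by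
      conv_lhs => rw [h1]
      rw [LeonardAux.absorb u v (L.E i), ← h1]
    have h3 : (L.Estar 0 * L.E i) *ᵥ ξs0 = (L.E i * L.Estar 0).trace • ξs0 := by
      conv_lhs => rw [← hEs0]
      rw [Matrix.mulVec_mulVec, habs, Matrix.smul_mulVec, hEs0]
    calc (∑ r : Fin (d+1), ((L.E r * L.Estar 0).trace)⁻¹ • (X r * L.Estar 0 * L.E r)).mulVec
          ((L.E i).mulVec ξs0)
        = ∑ r : Fin (d+1), ((L.E r * L.Estar 0).trace)⁻¹ •
            ((X r * L.Estar 0 * L.E r * L.E i) *ᵥ ξs0) := by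
          rw [LeonardAux.sum_mulVec]
          exact Finset.sum_congr rfl fun r _ => by
            rw [Matrix.smul_mulVec, Matrix.mulVec_mulVec]
      _ = ((L.E i * L.Estar 0).trace)⁻¹ • ((X i * L.Estar 0 * L.E i * L.E i) *ᵥ ξs0) := by
          refine Finset.sum_eq_single _ (fun b _ hb => ?_) (by simp)
          have hzz : X b * L.Estar 0 * L.E b * L.E i = 0 := by
            rw [mul_assoc, L.E_mul, if_neg hb, mul_zero]
          rw [hzz, Matrix.zero_mulVec, smul_zero]
      _ = (X i).mulVec ξs0 := by
          have hEE : X i * L.Estar 0 * L.E i * L.E i = X i * L.Estar 0 * L.E i := by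
            rw [mul_assoc, L.E_mul]; simp
          rw [hEE, mul_assoc, ← Matrix.mulVec_mulVec, h3, Matrix.mulVec_smul, smul_smul,
            inv_mul_cancel₀ htr, one_smul]
  exact ⟨fun i => hgen L.E i, fun X _ i => hgen X i⟩
end
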